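/- arXiv:1810.11312 — 8 statements merged into one kernel-verified Lean document; each statement's English description precedes it below -/
import Mathlib

section
/- Let W be any M×4 complex matrix with columns w_1, w_2, w_3, w_4, let x_1,...,x_4 be complex numbers, let X_Q be the TBH code matrix of x_1,...,x_4, and let a(ω) = (1, e^{-iω},..., e^{-i(M-1)ω}) be the row array response vector. Then for every real ω, Σ_{t=1}^{4} |a(ω)·(W·X_Q) e_t|² = α·Σ_{n=1}^{4} |W_n(ω)|² + 2β·Re(W_1(ω)·conj(W_3(ω)) + W_2(ω)·conj(W_4(ω))), where W_n(ω) = a(ω)·w_n, α = Σ_{i=1}^{4}|x_i|², β = 2·Re(x_1·conj(x_3) + x_2·conj(x_4)), and e_t is the t-th standard basis column vector of ℂ⁴. -/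
open Matrix

/-- The TBH quasi-orthogonal space-time block code matrix `X_Q`. -/
noncomputable def XQ (x₁ x₂ x₃ x₄ : ℂ) : Matrix (Fin 4) (Fin 4) ℂ :=
  !![x₁, starRingEnd ℂ x₂, x₃, starRingEnd ℂ x₄;
     x₂, -starRingEnd ℂ x₁, x₄, -starRingEnd ℂ x₃;
     x₃, starRingEnd ℂ x₄, x₁, starRingEnd ℂ x₂;
     x₄, -starRingEnd ℂ x₃, x₂, -starRingEnd ℂ x₁]

/-- The array response entry `e^{-i m ω}` for antenna `m`. -/
noncomputable def arv (M : ℕ) (ω : ℝ) (m : Fin M) : ℂ :=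
  Complex.exp (-Complex.I * ((m : ℕ) : ℂ) * (ω : ℂ))

/-- `W_n(ω) = a(ω) · w_n`, the Fourier transform of the `n`-th column of `W`. -/
noncomputable def colFT (M : ℕ) (W : Matrix (Fin M) (Fin 4) ℂ) (ω : ℝ) (n : Fin 4) : ℂ :=
  ∑ m : Fin M, arv M ω m * W m n

set_option maxHeartbeats 1600000 in
lemma aux (c0 c1 c2 c3 x1 x2 x3 x4 : ℂ) :
    ‖c0*x1+c1*x2+c2*x3+c3*x4‖^2
  + ‖c0*(starRingEnd ℂ x2)+c1*(-starRingEnd ℂ x1)+c2*(starRingEnd ℂ x4)+c3*(-starRingEnd ℂ x3)‖^2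
  + ‖c0*x3+c1*x4+c2*x1+c3*x2‖^2
  + ‖c0*(starRingEnd ℂ x4)+c1*(-starRingEnd ℂ x3)+c2*(starRingEnd ℂ x2)+c3*(-starRingEnd ℂ x1)‖^2
  = (‖x1‖^2+‖x2‖^2+‖x3‖^2+‖x4‖^2) * (‖c0‖^2+‖c1‖^2+‖c2‖^2+‖c3‖^2)
    + 2 * (2 * (x1 * starRingEnd ℂ x3 + x2 * starRingEnd ℂ x4).re) *
      (c0 * starRingEnd ℂ c2 + c1 * starRingEnd ℂ c3).re := by
  simp only [← Complex.normSq_eq_norm_sq, Complex.normSq_apply,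
    Complex.add_re, Complex.add_im, Complex.mul_re, Complex.mul_im, Complex.neg_re,
    Complex.neg_im, Complex.conj_re, Complex.conj_im]
  ring

set_option maxHeartbeats 1600000 in
/-- `∑_{t=1}^4 |a(ω)(W X_Q) e_t|² = α ∑_n |W_n(ω)|²
+ 2β Re(W₁(ω) conj(W₃(ω)) + W₂(ω) conj(W₄(ω)))`. -/
theorem stmt4 (M : ℕ) (W : Matrix (Fin M) (Fin 4) ℂ) (x₁ x₂ x₃ x₄ : ℂ) (ω : ℝ) :
    (∑ t : Fin 4, ‖∑ m : Fin M, arv M ω m * (W * XQ x₁ x₂ x₃ x₄) m t‖ ^ 2) =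
      (‖x₁‖ ^ 2 + ‖x₂‖ ^ 2 + ‖x₃‖ ^ 2 + ‖x₄‖ ^ 2) *
          (∑ n : Fin 4, ‖colFT M W ω n‖ ^ 2)
        + 2 * (2 * (x₁ * starRingEnd ℂ x₃ + x₂ * starRingEnd ℂ x₄).re) *
          (colFT M W ω 0 * starRingEnd ℂ (colFT M W ω 2)
            + colFT M W ω 1 * starRingEnd ℂ (colFT M W ω 3)).re := by
  have key : ∀ t : Fin 4, (∑ m : Fin M, arv M ω m * (W * XQ x₁ x₂ x₃ x₄) m t)
      = ∑ n : Fin 4, colFT M W ω n * XQ x₁ x₂ x₃ x₄ n t := by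
    intro t
    simp only [Matrix.mul_apply, colFT, Finset.sum_mul, Finset.mul_sum]
    rw [Finset.sum_comm]
    congr 1; ext n; congr 1; ext m; ring
  simp only [key, Fin.sum_univ_four]
  generalize colFT M W ω 0 = c0
  generalize colFT M W ω 1 = c1
  generalize colFT M W ω 2 = c2
  generalize colFT M W ω 3 = c3
  have := aux c0 c1 c2 c3 x₁ x₂ x₃ x₄
  simp only [XQ, Matrix.of_apply, Matrix.cons_val', Matrix.cons_val_zero, Matrix.cons_val_one,
    Matrix.head_cons, Matrix.empty_val', Matrix.cons_val_fin_one, Matrix.head_fin_const,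
    Matrix.cons_val_two, Matrix.tail_cons, Matrix.cons_val_three]
  linarith [this]
end

section
/- (Theorem 1) Let w_1, w_2, w_3, w_4 be complex sequences of length M (columns of an M×4 precoding matrix W) such that {w_1, w_2} and {w_3, w_4} are each complementary pairs, i.e., R_{w_1}(τ) + R_{w_2}(τ) = 0 and R_{w_3}(τ) + R_{w_4}(τ) = 0 for all τ ≠ 0, and the two pairs are mutually orthogonal complementary, i.e., R_{w_1,w_3}(τ) + R_{w_2,w_4}(τ) = 0 for all τ. Let x_1,...,x_4 be complex numbers, X_Q the TBH code matrix of x_1,...,x_4, and a(ω) = (1, e^{-iω},..., e^{-i(M-1)ω}). Then for every real ω, Σ_{t=1}^{4} |a(ω)·(W·X_Q) e_t|² = α·Σ_{n=1}^{4} R_{w_n}(0), where α = Σ_{i=1}^{4}|x_i|²; in particular the received signal sum power over the four time slots is independent of ω. -/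
open Matrix

/-- Aperiodic crosscorrelation of two length-`M` complex sequences (regarded as
functions on `ℤ` vanishing outside `{0,...,M-1}`). -/
noncomputable def acf (M : ℕ) (w v : ℤ → ℂ) (τ : ℤ) : ℂ :=
  ∑ m ∈ Finset.range M, w m * (starRingEnd ℂ) (v ((m : ℤ) + τ))

lemma cast_range (M : ℕ) : (Finset.range M).image (Nat.cast : ℕ → ℤ) = Finset.Icc 0 ((M:ℤ)-1) := by
  ext k
  simp only [Finset.mem_image, Finset.mem_range, Finset.mem_Icc]
  constructor
  · rintro ⟨n, hn, rfl⟩; omega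
  · intro h; exact ⟨k.toNat, by omega, by omega⟩

lemma sum_range_eq_sum_Icc (M : ℕ) (g : ℤ → ℂ) :
    ∑ m ∈ Finset.range M, g ((m:ℕ):ℤ) = ∑ k ∈ Finset.Icc (0:ℤ) ((M:ℤ)-1), g k := by
  rw [← cast_range, Finset.sum_image (fun a _ b _ h => by exact_mod_cast h)]

lemma sum_fin_eq_sum_Icc (M : ℕ) (g : ℤ → ℂ) :
    ∑ m : Fin M, g ((m:ℕ):ℤ) = ∑ k ∈ Finset.Icc (0:ℤ) ((M:ℤ)-1), g k := by
  rw [Fin.sum_univ_eq_sum_range (fun m => g (m:ℤ)), sum_range_eq_sum_Icc]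

lemma shift_sum (a b m : ℤ) (f : ℤ → ℂ) :
    ∑ τ ∈ Finset.Icc a b, f (m + τ) = ∑ k ∈ Finset.Icc (m+a) (m+b), f k := by
  rw [← Finset.map_add_left_Icc, Finset.sum_map]
  simp [addLeftEmbedding_apply]

lemma key (M : ℕ) (ω : ℝ) (u v : ℤ → ℂ)
    (hv : ∀ m : ℤ, (m < 0 ∨ (M:ℤ) ≤ m) → v m = 0) :
    (∑ m : Fin M, arv M ω m * u ((m:ℕ):ℤ)) *
      (starRingEnd ℂ) (∑ m : Fin M, arv M ω m * v ((m:ℕ):ℤ))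
    = ∑ τ ∈ Finset.Icc (1 - (M:ℤ)) ((M:ℤ) - 1),
        Complex.exp (Complex.I * (τ:ℂ) * (ω:ℂ)) * acf M u v τ := by
  have harv : ∀ m : Fin M, arv M ω m
      = Complex.exp (-Complex.I * (((m:ℕ):ℤ):ℂ) * (ω:ℂ)) := by
    intro m; simp [arv]
  -- convert both Fin sums to Icc sums
  have hL1 : (∑ m : Fin M, arv M ω m * u ((m:ℕ):ℤ))
      = ∑ k ∈ Finset.Icc (0:ℤ) ((M:ℤ)-1), Complex.exp (-Complex.I * (k:ℂ) * (ω:ℂ)) * u k := by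
    rw [← sum_fin_eq_sum_Icc M (fun k => Complex.exp (-Complex.I * (k:ℂ) * (ω:ℂ)) * u k)]
    exact Finset.sum_congr rfl fun m _ => by rw [harv]
  have hL2 : (∑ m : Fin M, arv M ω m * v ((m:ℕ):ℤ))
      = ∑ k ∈ Finset.Icc (0:ℤ) ((M:ℤ)-1), Complex.exp (-Complex.I * (k:ℂ) * (ω:ℂ)) * v k := by
    rw [← sum_fin_eq_sum_Icc M (fun k => Complex.exp (-Complex.I * (k:ℂ) * (ω:ℂ)) * v k)]
    exact Finset.sum_congr rfl fun m _ => by rw [harv]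
  rw [hL1, hL2, map_sum, Finset.sum_mul]
  -- RHS: expand acf into Icc sum and swap
  have hacf : ∀ τ : ℤ, acf M u v τ
      = ∑ m ∈ Finset.Icc (0:ℤ) ((M:ℤ)-1), u m * (starRingEnd ℂ) (v (m + τ)) := by
    intro τ
    rw [acf, ← sum_range_eq_sum_Icc M (fun m => u m * (starRingEnd ℂ) (v (m + τ)))]
  rw [show (∑ τ ∈ Finset.Icc (1 - (M:ℤ)) ((M:ℤ) - 1),
        Complex.exp (Complex.I * (τ:ℂ) * (ω:ℂ)) * acf M u v τ)
      = ∑ τ ∈ Finset.Icc (1 - (M:ℤ)) ((M:ℤ) - 1), ∑ m ∈ Finset.Icc (0:ℤ) ((M:ℤ)-1),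
        Complex.exp (Complex.I * (τ:ℂ) * (ω:ℂ)) * (u m * (starRingEnd ℂ) (v (m + τ)))
      from Finset.sum_congr rfl fun τ _ => by rw [hacf, Finset.mul_sum]]
  rw [Finset.sum_comm]
  refine Finset.sum_congr rfl fun m hm => ?_
  rw [Finset.mem_Icc] at hm
  -- fixed m: reindex τ ↦ m + τ
  have hre : ∀ τ : ℤ, Complex.exp (Complex.I * (τ:ℂ) * (ω:ℂ)) * (u m * (starRingEnd ℂ) (v (m + τ)))
      = (fun k : ℤ => Complex.exp (Complex.I * ((k:ℂ) - (m:ℂ)) * (ω:ℂ)) * (u m * (starRingEnd ℂ) (v k))) (m + τ) := by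
    intro τ; simp only []
    congr 2
    push_cast; ring
  rw [Finset.sum_congr rfl fun τ _ => hre τ]
  rw [shift_sum (1 - (M:ℤ)) ((M:ℤ) - 1) m
      (fun k : ℤ => Complex.exp (Complex.I * ((k:ℂ) - (m:ℂ)) * (ω:ℂ)) * (u m * (starRingEnd ℂ) (v k)))]
  have hsub : Finset.Icc (0:ℤ) ((M:ℤ)-1) ⊆ Finset.Icc (m + (1 - (M:ℤ))) (m + ((M:ℤ) - 1)) := by
    intro k hk
    rw [Finset.mem_Icc] at *
    omega
  have hzero : ∀ k ∈ Finset.Icc (m + (1 - (M:ℤ))) (m + ((M:ℤ) - 1)),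
      k ∉ Finset.Icc (0:ℤ) ((M:ℤ)-1) →
      (fun k : ℤ => Complex.exp (Complex.I * ((k:ℂ) - (m:ℂ)) * (ω:ℂ)) * (u m * (starRingEnd ℂ) (v k))) k = 0 := by
    intro k _ hk
    rw [Finset.mem_Icc] at hk
    push_neg at hk
    have : v k = 0 := hv k (by omega)
    simp [this]
  have hshrink := Finset.sum_subset (f := fun k : ℤ =>
      Complex.exp (Complex.I * ((k:ℂ) - (m:ℂ)) * (ω:ℂ)) * (u m * (starRingEnd ℂ) (v k)))
      hsub hzero
  refine Eq.trans ?_ hshrink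
  simp only [mul_assoc, Finset.mul_sum]
  refine Finset.sum_congr rfl fun k _ => ?_
  beta_reduce
  rw [_root_.map_mul]
  rw [show (starRingEnd ℂ) (Complex.exp (-Complex.I * (((k:ℤ):ℂ) * (ω:ℂ)))) =
      Complex.exp (Complex.I * (((k:ℤ):ℂ) * (ω:ℂ))) from by
    rw [← Complex.exp_conj]; congr 1; simp [Complex.conj_ofReal]]
  rw [show Complex.exp (Complex.I * ((((k:ℤ):ℂ) - ((m:ℤ):ℂ)) * (ω:ℂ))) =
      Complex.exp (-Complex.I * (((m:ℤ):ℂ) * (ω:ℂ))) * Complex.exp (Complex.I * (((k:ℤ):ℂ) * (ω:ℂ))) from by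
    rw [← Complex.exp_add]; congr 1; ring]
  ring

lemma alg (A B C D x₁ x₂ x₃ x₄ : ℂ) :
    (A*x₁+B*x₂+C*x₃+D*x₄) * (starRingEnd ℂ) (A*x₁+B*x₂+C*x₃+D*x₄)
  + (A*(starRingEnd ℂ) x₂ + B*(-(starRingEnd ℂ) x₁) + C*(starRingEnd ℂ) x₄ + D*(-(starRingEnd ℂ) x₃))
      * (starRingEnd ℂ) (A*(starRingEnd ℂ) x₂ + B*(-(starRingEnd ℂ) x₁) + C*(starRingEnd ℂ) x₄ + D*(-(starRingEnd ℂ) x₃))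
  + (A*x₃+B*x₄+C*x₁+D*x₂) * (starRingEnd ℂ) (A*x₃+B*x₄+C*x₁+D*x₂)
  + (A*(starRingEnd ℂ) x₄ + B*(-(starRingEnd ℂ) x₃) + C*(starRingEnd ℂ) x₂ + D*(-(starRingEnd ℂ) x₁))
      * (starRingEnd ℂ) (A*(starRingEnd ℂ) x₄ + B*(-(starRingEnd ℂ) x₃) + C*(starRingEnd ℂ) x₂ + D*(-(starRingEnd ℂ) x₁))
  = (x₁*(starRingEnd ℂ) x₁ + x₂*(starRingEnd ℂ) x₂ + x₃*(starRingEnd ℂ) x₃ + x₄*(starRingEnd ℂ) x₄)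
      * ((A*(starRingEnd ℂ) A + B*(starRingEnd ℂ) B) + (C*(starRingEnd ℂ) C + D*(starRingEnd ℂ) D))
  + (x₁*(starRingEnd ℂ) x₃ + (starRingEnd ℂ) x₁*x₃ + x₂*(starRingEnd ℂ) x₄ + (starRingEnd ℂ) x₂*x₄)
      * (A*(starRingEnd ℂ) C + B*(starRingEnd ℂ) D)
  + (x₁*(starRingEnd ℂ) x₃ + (starRingEnd ℂ) x₁*x₃ + x₂*(starRingEnd ℂ) x₄ + (starRingEnd ℂ) x₂*x₄)
      * (starRingEnd ℂ) (A*(starRingEnd ℂ) C + B*(starRingEnd ℂ) D) := by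
  simp only [map_add, _root_.map_mul, map_neg, Complex.conj_conj]
  ring


/-- Theorem 1: if `{w₁,w₂}` and `{w₃,w₄}` are complementary pairs
that are mutually orthogonal complementary, then for every `ω` the received
signal sum power over the four time slots equals `α ∑_n R_{w_n}(0)`,
independently of `ω`. -/
theorem stmt5 (M : ℕ) (w : Fin 4 → ℤ → ℂ)
    (hsupp : ∀ n, ∀ m : ℤ, (m < 0 ∨ (M : ℤ) ≤ m) → w n m = 0)
    (h12 : ∀ τ : ℤ, τ ≠ 0 → acf M (w 0) (w 0) τ + acf M (w 1) (w 1) τ = 0)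
    (h34 : ∀ τ : ℤ, τ ≠ 0 → acf M (w 2) (w 2) τ + acf M (w 3) (w 3) τ = 0)
    (hcross : ∀ τ : ℤ, acf M (w 0) (w 2) τ + acf M (w 1) (w 3) τ = 0)
    (x₁ x₂ x₃ x₄ : ℂ) (ω : ℝ) :
    ((∑ t : Fin 4, ‖∑ m : Fin M, arv M ω m *
        ((Matrix.of fun (m' : Fin M) (n : Fin 4) => w n ((m' : ℕ) : ℤ)) *
          XQ x₁ x₂ x₃ x₄) m t‖ ^ 2 : ℝ) : ℂ) =
      ((‖x₁‖ ^ 2 + ‖x₂‖ ^ 2 + ‖x₃‖ ^ 2 + ‖x₄‖ ^ 2 : ℝ) : ℂ) *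
        ∑ n : Fin 4, acf M (w n) (w n) 0 := by
  have hnorm : ∀ z : ℂ, ((‖z‖:ℝ):ℂ)^2 = z * (starRingEnd ℂ) z := fun z => by
    rw [Complex.mul_conj, Complex.normSq_eq_norm_sq]; norm_cast
  rcases Nat.eq_zero_or_pos M with hM | hM
  · subst hM
    simp [acf]
  -- abbreviations
  set A := ∑ m : Fin M, arv M ω m * w 0 ((m:ℕ):ℤ) with hA
  set B := ∑ m : Fin M, arv M ω m * w 1 ((m:ℕ):ℤ) with hB
  set C := ∑ m : Fin M, arv M ω m * w 2 ((m:ℕ):ℤ) with hC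
  set D := ∑ m : Fin M, arv M ω m * w 3 ((m:ℕ):ℤ) with hD
  have hz : ∀ t : Fin 4, (∑ m : Fin M, arv M ω m *
      ((Matrix.of fun (m' : Fin M) (n : Fin 4) => w n ((m' : ℕ) : ℤ)) *
        XQ x₁ x₂ x₃ x₄) m t)
      = A * XQ x₁ x₂ x₃ x₄ 0 t + B * XQ x₁ x₂ x₃ x₄ 1 t
        + C * XQ x₁ x₂ x₃ x₄ 2 t + D * XQ x₁ x₂ x₃ x₄ 3 t := by
    intro t
    have : ∀ m : Fin M,
        ((Matrix.of fun (m' : Fin M) (n : Fin 4) => w n ((m' : ℕ) : ℤ)) *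
          XQ x₁ x₂ x₃ x₄) m t = ∑ n : Fin 4, w n ((m:ℕ):ℤ) * XQ x₁ x₂ x₃ x₄ n t := by
      intro m; rw [Matrix.mul_apply]; rfl
    rw [Finset.sum_congr rfl fun m _ => by rw [this m]]
    rw [show (∑ m : Fin M, arv M ω m * ∑ n : Fin 4, w n ((m:ℕ):ℤ) * XQ x₁ x₂ x₃ x₄ n t)
        = ∑ n : Fin 4, (∑ m : Fin M, arv M ω m * w n ((m:ℕ):ℤ)) * XQ x₁ x₂ x₃ x₄ n t from by
      simp only [Finset.mul_sum]
      rw [Finset.sum_comm]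
      exact Finset.sum_congr rfl fun n _ => by
        rw [Finset.sum_mul]; exact Finset.sum_congr rfl fun m _ => by ring]
    rw [Fin.sum_univ_four]
  have k00 := key M ω (w 0) (w 0) (hsupp 0)
  have k11 := key M ω (w 1) (w 1) (hsupp 1)
  have k22 := key M ω (w 2) (w 2) (hsupp 2)
  have k33 := key M ω (w 3) (w 3) (hsupp 3)
  have k02 := key M ω (w 0) (w 2) (hsupp 2)
  have k13 := key M ω (w 1) (w 3) (hsupp 3)
  have hmem : (0:ℤ) ∈ Finset.Icc (1 - (M:ℤ)) ((M:ℤ) - 1) := by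
    rw [Finset.mem_Icc]; omega
  have hP : A * (starRingEnd ℂ) C + B * (starRingEnd ℂ) D = 0 := by
    rw [hA, hB, hC, hD, k02, k13, ← Finset.sum_add_distrib]
    refine Finset.sum_eq_zero fun τ _ => ?_
    rw [← mul_add, hcross τ, mul_zero]
  have hAB : A * (starRingEnd ℂ) A + B * (starRingEnd ℂ) B
      = acf M (w 0) (w 0) 0 + acf M (w 1) (w 1) 0 := by
    rw [hA, hB, k00, k11, ← Finset.sum_add_distrib]
    rw [Finset.sum_congr rfl (fun τ _ => by rw [← mul_add] :
      ∀ τ ∈ Finset.Icc (1 - (M:ℤ)) ((M:ℤ) - 1),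
        Complex.exp (Complex.I * (τ:ℂ) * (ω:ℂ)) * acf M (w 0) (w 0) τ
        + Complex.exp (Complex.I * (τ:ℂ) * (ω:ℂ)) * acf M (w 1) (w 1) τ
        = Complex.exp (Complex.I * (τ:ℂ) * (ω:ℂ)) * (acf M (w 0) (w 0) τ + acf M (w 1) (w 1) τ))]
    rw [Finset.sum_eq_single_of_mem 0 hmem (fun b _ hb => by rw [h12 b hb, mul_zero])]
    simp
  have hCD : C * (starRingEnd ℂ) C + D * (starRingEnd ℂ) D
      = acf M (w 2) (w 2) 0 + acf M (w 3) (w 3) 0 := by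
    rw [hC, hD, k22, k33, ← Finset.sum_add_distrib]
    rw [Finset.sum_congr rfl (fun τ _ => by rw [← mul_add] :
      ∀ τ ∈ Finset.Icc (1 - (M:ℤ)) ((M:ℤ) - 1),
        Complex.exp (Complex.I * (τ:ℂ) * (ω:ℂ)) * acf M (w 2) (w 2) τ
        + Complex.exp (Complex.I * (τ:ℂ) * (ω:ℂ)) * acf M (w 3) (w 3) τ
        = Complex.exp (Complex.I * (τ:ℂ) * (ω:ℂ)) * (acf M (w 2) (w 2) τ + acf M (w 3) (w 3) τ))]
    rw [Finset.sum_eq_single_of_mem 0 hmem (fun b _ hb => by rw [h34 b hb, mul_zero])]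
    simp
  -- main computation
  push_cast
  rw [Finset.sum_congr rfl fun t _ => by rw [hnorm, hz t]]
  rw [Fin.sum_univ_four]
  simp only [XQ, Fin.isValue, Matrix.of_apply, Matrix.cons_val', Matrix.cons_val_three,
    Nat.succ_eq_add_one, Nat.reduceAdd, Matrix.tail_cons, Matrix.head_cons, Matrix.empty_val',
    Matrix.cons_val_fin_one, Matrix.cons_val_two, Matrix.cons_val_zero, Matrix.cons_val_one, Matrix.vecHead]
  rw [alg]
  rw [hAB, hCD, hP]
  simp only [map_zero, mul_zero, add_zero]
  rw [Fin.sum_univ_four]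
  rw [hnorm x₁, hnorm x₂, hnorm x₃, hnorm x₄]
  ring
end

section
/- Let c be a complex sequence of length L and n ∈ {0,1,2,3}. The aperiodic autocorrelation of the length-4L sequence c ⊗ u_n satisfies: R_{c⊗u_n}(τ) = R_c(τ/4) when τ is divisible by 4, and R_{c⊗u_n}(τ) = 0 otherwise. -/
/-- Kronecker product `c ⊗ u_n` of a length-`L` sequence `c` with the `n`-th
standard basis vector of `ℂ⁴` (0-indexed): the length-`4L` sequence whose entry
at position `4l + n` is `c(l)` for `0 ≤ l ≤ L-1`, and which is zero elsewhere. -/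
noncomputable def kron (L : ℕ) (c : ℤ → ℂ) (n : ℤ) : ℤ → ℂ := fun m =>
  if (m - n) % 4 = 0 ∧ 0 ≤ (m - n) / 4 ∧ (m - n) / 4 < (L : ℤ) then c ((m - n) / 4) else 0

/-- `R_{c⊗u_n}(τ) = R_c(τ/4)` if `4 ∣ τ`, and `0` otherwise. -/
theorem stmt7 (L : ℕ) (c : ℤ → ℂ)
    (hc : ∀ m : ℤ, (m < 0 ∨ (L : ℤ) ≤ m) → c m = 0)
    (n : Fin 4) (τ : ℤ) :
    acf (4 * L) (kron L c ((n : ℕ) : ℤ)) (kron L c ((n : ℕ) : ℤ)) τ =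
      if (4 : ℤ) ∣ τ then acf L c c (τ / 4) else 0 := by
  classical
  set N : ℤ := ((n : ℕ) : ℤ) with hNdef
  have hN0 : 0 ≤ N := Int.ofNat_nonneg _
  have hN4 : N < 4 := by rw [hNdef]; exact_mod_cast n.2
  have key : acf (4 * L) (kron L c N) (kron L c N) τ
      = ∑ l ∈ Finset.range L,
          c l * (starRingEnd ℂ) (kron L c N ((4 * (l : ℤ) + N) + τ)) := by
    rw [acf]
    have hinj : ∀ x ∈ Finset.range L, ∀ y ∈ Finset.range L,
        4 * x + (n : ℕ) = 4 * y + (n : ℕ) → x = y := by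
      intro a _ b _ h; omega
    have hstep : ∑ m ∈ Finset.range (4 * L),
          kron L c N (m : ℤ) * (starRingEnd ℂ) (kron L c N ((m : ℤ) + τ))
        = ∑ l ∈ Finset.range L,
          kron L c N ((4 * l + (n : ℕ) : ℕ) : ℤ) *
            (starRingEnd ℂ) (kron L c N (((4 * l + (n : ℕ) : ℕ) : ℤ) + τ)) := by
      refine (Finset.sum_subset ?_ ?_).symm.trans (Finset.sum_image hinj)
      · intro m hm
        simp only [Finset.mem_image, Finset.mem_range] at hm ⊢
        obtain ⟨l, hl, rfl⟩ := hm
        omega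
      · intro m hm hm'
        simp only [Finset.mem_image, Finset.mem_range] at hm hm'
        have hz : kron L c N (m : ℤ) = 0 := by
          rw [kron, if_neg]
          rintro ⟨h1, h2, h3⟩
          set q := ((m : ℤ) - N) / 4 with hq
          have hm4 : (m : ℤ) = 4 * q + N := by
            have := Int.mul_ediv_add_emod ((m : ℤ) - N) 4
            omega
          exact hm' ⟨q.toNat, by omega, by omega⟩
        rw [hz, zero_mul]
    rw [hstep]
    refine Finset.sum_congr rfl fun l hl => ?_
    simp only [Finset.mem_range] at hl
    have h1 : kron L c N ((4 * l + (n : ℕ) : ℕ) : ℤ) = c l := by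
      rw [kron]
      have he : (((4 * l + (n : ℕ) : ℕ) : ℤ) - N) = 4 * (l : ℤ) := by push_cast; ring
      rw [if_pos]
      · rw [he, Int.mul_ediv_cancel_left _ (by norm_num)]
      · rw [he, Int.mul_ediv_cancel_left _ (by norm_num)]
        refine ⟨by omega, by exact_mod_cast Nat.zero_le l, by exact_mod_cast hl⟩
    rw [h1]
    have h2 : ((4 * l + (n : ℕ) : ℕ) : ℤ) + τ = 4 * (l : ℤ) + N + τ := by push_cast; ring
    rw [h2]
  rw [key]
  by_cases hd : (4 : ℤ) ∣ τ
  · rw [if_pos hd]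
    obtain ⟨t, rfl⟩ := hd
    rw [Int.mul_ediv_cancel_left _ (by norm_num)]
    rw [acf]
    refine Finset.sum_congr rfl fun l hl => ?_
    simp only [Finset.mem_range] at hl
    have he : (4 * (l : ℤ) + N) + 4 * t - N = 4 * ((l : ℤ) + t) := by ring
    rw [kron, he, Int.mul_ediv_cancel_left _ (by norm_num)]
    by_cases hb : 0 ≤ (l : ℤ) + t ∧ (l : ℤ) + t < (L : ℤ)
    · rw [if_pos ⟨by omega, hb.1, hb.2⟩]
    · rw [if_neg (by tauto)]
      rw [hc ((l : ℤ) + t) (by omega)]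
  · rw [if_neg hd]
    refine Finset.sum_eq_zero fun l hl => ?_
    have hz : kron L c N ((4 * (l : ℤ) + N) + τ) = 0 := by
      rw [kron, if_neg]
      rintro ⟨h1, -⟩
      have : ((4 * (l : ℤ) + N) + τ - N) = τ + 4 * l := by ring
      rw [this, Int.add_mul_emod_self_left] at h1
      exact hd (Int.dvd_of_emod_eq_zero h1)
    rw [hz, map_zero, mul_zero]
end

section
/- Let c and d be complex sequences of length L and n, k ∈ {0,1,2,3}. The aperiodic crosscorrelation of the length-4L sequences c ⊗ u_n and d ⊗ u_k satisfies: R_{c⊗u_n, d⊗u_k}(τ) = R_{c,d}((τ − (k − n))/4) when τ ≡ k − n (mod 4), and R_{c⊗u_n, d⊗u_k}(τ) = 0 otherwise. -/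
lemma kron_sum (L : ℕ) (c : ℤ → ℂ) (n : Fin 4) (F : ℤ → ℂ) :
    ∑ m ∈ Finset.range (4 * L), kron L c ((n : ℕ) : ℤ) m * F m
      = ∑ l ∈ Finset.range L, c l * F (4 * l + ((n : ℕ) : ℤ)) := by
  have hinj : Set.InjOn (fun l => 4 * l + (n : ℕ)) (Finset.range L) := by
    intro a _ b _ h; simp only [] at h; omega
  have h1 : ∑ l ∈ Finset.range L, c l * F (4 * l + ((n : ℕ) : ℤ))
      = ∑ m ∈ (Finset.range L).image (fun l => 4 * l + (n : ℕ)),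
          kron L c ((n : ℕ) : ℤ) m * F m := by
    rw [Finset.sum_image hinj]
    refine Finset.sum_congr rfl fun l hl => ?_
    have hl' := Finset.mem_range.mp hl
    have hx : ((4 * l + (n : ℕ) : ℕ) : ℤ) - ((n : ℕ) : ℤ) = 4 * (l : ℤ) := by push_cast; ring
    unfold kron
    rw [hx, Int.mul_ediv_cancel_left _ (by norm_num), Int.mul_emod_right]
    rw [if_pos ⟨rfl, by positivity, by exact_mod_cast hl'⟩]
    push_cast
    ring_nf
  rw [h1]
  refine (Finset.sum_subset ?_ ?_).symm
  · intro m hm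
    simp only [Finset.mem_image, Finset.mem_range] at hm ⊢
    obtain ⟨l, hl, rfl⟩ := hm
    have := n.isLt
    omega
  · intro m hm hnot
    unfold kron
    split
    · next h =>
      exfalso
      obtain ⟨h1, h2, h3⟩ := h
      have heq : (m : ℤ) - ((n : ℕ) : ℤ) =
          4 * (((m : ℤ) - ((n : ℕ) : ℤ)) / 4) := by omega
      set q := ((m : ℤ) - ((n : ℕ) : ℤ)) / 4 with hq
      apply hnot
      simp only [Finset.mem_image, Finset.mem_range]
      refine ⟨q.toNat, by omega, by omega⟩
    · simp

/-- `R_{c⊗u_n, d⊗u_k}(τ) = R_{c,d}((τ-(k-n))/4)` when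
`τ ≡ k - n (mod 4)`, and `0` otherwise. -/
theorem stmt8 (L : ℕ) (c d : ℤ → ℂ)
    (hc : ∀ m : ℤ, (m < 0 ∨ (L : ℤ) ≤ m) → c m = 0)
    (hd : ∀ m : ℤ, (m < 0 ∨ (L : ℤ) ≤ m) → d m = 0)
    (n k : Fin 4) (τ : ℤ) :
    acf (4 * L) (kron L c ((n : ℕ) : ℤ)) (kron L d ((k : ℕ) : ℤ)) τ =
      if (4 : ℤ) ∣ (τ - (((k : ℕ) : ℤ) - ((n : ℕ) : ℤ))) then
        acf L c d ((τ - (((k : ℕ) : ℤ) - ((n : ℕ) : ℤ))) / 4)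
      else 0 := by
  unfold acf
  rw [kron_sum L c n (fun x => (starRingEnd ℂ) (kron L d ((k : ℕ) : ℤ) (x + τ)))]
  by_cases hdvd : (4 : ℤ) ∣ (τ - (((k : ℕ) : ℤ) - ((n : ℕ) : ℤ)))
  · rw [if_pos hdvd]
    obtain ⟨s, hs⟩ := hdvd
    have hsdiv : (τ - (((k : ℕ) : ℤ) - ((n : ℕ) : ℤ))) / 4 = s := by omega
    rw [hsdiv]
    refine Finset.sum_congr rfl fun l _ => ?_
    congr 1
    congr 1
    unfold kron
    have hx : 4 * (l : ℤ) + ((n : ℕ) : ℤ) + τ - ((k : ℕ) : ℤ) = 4 * ((l : ℤ) + s) := by omega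
    rw [hx, Int.mul_ediv_cancel_left _ (by norm_num), Int.mul_emod_right]
    split
    · rfl
    · next h =>
      rw [hd ((l : ℤ) + s) (by omega)]
  · rw [if_neg hdvd]
    refine Finset.sum_eq_zero fun l _ => ?_
    unfold kron
    rw [if_neg, map_zero, mul_zero]
    rintro ⟨h1, -⟩
    omega
end

section
/- Let c_1, c_2, c_3, c_4 be sequences of length L with entries in {1, −1}, set M = 4L, let W_Q be the M×4 matrix whose n-th column is √(4/M)·(c_n ⊗ u_n), and let x_1,...,x_4 be complex numbers each of modulus 1/2, with X_Q the TBH code matrix of x_1,...,x_4. Then every entry of the M×4 matrix S = W_Q·X_Q has modulus exactly 1/√M; i.e., the instantaneous transmit power is equal across all antennas at every time slot. -/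
open Matrix

noncomputable def WQ (L : ℕ) (c : Fin 4 → ℤ → ℂ) : Matrix (Fin (4 * L)) (Fin 4) ℂ :=
  Matrix.of fun m n =>
    (Real.sqrt (4 / (4 * (L : ℝ))) : ℂ) * kron L (c n) ((n : ℕ) : ℤ) ((m : ℕ) : ℤ)

lemma kron_eval (L : ℕ) (c : ℤ → ℂ) (n : Fin 4) (m : Fin (4 * L)) :
    kron L c ((n : ℕ) : ℤ) ((m : ℕ) : ℤ) =
      if (m : ℕ) % 4 = (n : ℕ) then c (((m : ℕ) : ℤ) / 4) else 0 := by
  unfold kron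
  have hm : (m : ℕ) < 4 * L := m.isLt
  have hn : (n : ℕ) < 4 := n.isLt
  split_ifs with h1 h2 h2
  · congr 1; omega
  · exfalso; omega
  · exfalso; omega
  · rfl

lemma XQ_norm (x₁ x₂ x₃ x₄ : ℂ)
    (hx₁ : ‖x₁‖ = 1 / 2) (hx₂ : ‖x₂‖ = 1 / 2) (hx₃ : ‖x₃‖ = 1 / 2) (hx₄ : ‖x₄‖ = 1 / 2)
    (i t : Fin 4) : ‖XQ x₁ x₂ x₃ x₄ i t‖ = 1 / 2 := by
  fin_cases i <;> fin_cases t <;>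
    simp [XQ, hx₁, hx₂, hx₃, hx₄, RCLike.norm_conj]

/-- for ±1-valued sequences `c₁,...,c₄` and symbols of modulus
`1/2`, every entry of `S = W_Q X_Q` has modulus exactly `1/√M` with `M = 4L`. -/
theorem stmt10 (L : ℕ) (hL : 0 < L) (c : Fin 4 → ℤ → ℂ)
    (hpm : ∀ n, ∀ l : ℤ, 0 ≤ l → l < (L : ℤ) → (c n l = 1 ∨ c n l = -1))
    (x₁ x₂ x₃ x₄ : ℂ)
    (hx₁ : ‖x₁‖ = 1 / 2) (hx₂ : ‖x₂‖ = 1 / 2) (hx₃ : ‖x₃‖ = 1 / 2) (hx₄ : ‖x₄‖ = 1 / 2) :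
    ∀ (m : Fin (4 * L)) (t : Fin 4),
      ‖(WQ L c * XQ x₁ x₂ x₃ x₄) m t‖ = 1 / Real.sqrt (4 * (L : ℝ)) := by
  intro m t
  have hm : (m : ℕ) < 4 * L := m.isLt
  have hc : ∀ n : Fin 4, ‖c n (((m : ℕ) : ℤ) / 4)‖ = 1 := by
    intro n
    rcases hpm n (((m : ℕ) : ℤ) / 4) (by omega) (by omega) with h | h <;> simp [h]
  have hs : ‖((Real.sqrt (4 / (4 * (L : ℝ))) : ℝ) : ℂ)‖ * (1 / 2)
      = 1 / Real.sqrt (4 * (L : ℝ)) := by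
    have hpos : (0:ℝ) < Real.sqrt (4 * (L : ℝ)) := by
      apply Real.sqrt_pos.2; positivity
    rw [Complex.norm_real, Real.norm_eq_abs, abs_of_nonneg (Real.sqrt_nonneg _),
      Real.sqrt_div (by norm_num : (0:ℝ) ≤ 4)]
    rw [show Real.sqrt 4 = 2 by
      rw [show (4:ℝ) = 2^2 by norm_num, Real.sqrt_sq (by norm_num)]]
    field_simp
  have key : ∀ i : Fin 4, (m : ℕ) % 4 = (i : ℕ) →
      ‖(WQ L c * XQ x₁ x₂ x₃ x₄) m t‖ = 1 / Real.sqrt (4 * (L : ℝ)) := by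
    intro i hi
    rw [Matrix.mul_apply]
    have hsum : ∑ j, WQ L c m j * XQ x₁ x₂ x₃ x₄ j t
        = WQ L c m i * XQ x₁ x₂ x₃ x₄ i t := by
      apply Finset.sum_eq_single
      · intro j _ hj
        have : (m : ℕ) % 4 ≠ (j : ℕ) := by
          intro h; exact hj (Fin.ext (by omega))
        simp [WQ, kron_eval, this]
      · intro h; exact absurd (Finset.mem_univ i) h
    rw [hsum]
    simp only [WQ, Matrix.of_apply, kron_eval, hi, if_pos rfl, if_true]
    rw [mul_assoc, norm_mul, norm_mul, hc i, XQ_norm x₁ x₂ x₃ x₄ hx₁ hx₂ hx₃ hx₄,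
      one_mul]
    exact hs
  have h4 : (m : ℕ) % 4 < 4 := Nat.mod_lt _ (by norm_num)
  exact key ⟨(m : ℕ) % 4, h4⟩ rfl
end

section
/- Let c_1, c_2, c_3, c_4 be sequences of length L with entries in {1, −1} such that {c_1, c_2} and {c_3, c_4} are complementary pairs, i.e., R_{c_1}(τ) + R_{c_2}(τ) = 0 and R_{c_3}(τ) + R_{c_4}(τ) = 0 for all τ ≠ 0, and the two pairs are mutually orthogonal complementary, i.e., R_{c_1,c_3}(τ) + R_{c_2,c_4}(τ) = 0 for all τ. Set M = 4L, let W_Q be the M×4 matrix whose n-th column is √(4/M)·(c_n ⊗ u_n), let x_1,...,x_4 be complex numbers each of modulus 1/2, let X_Q be the TBH code matrix of x_1,...,x_4, and let a(ω) = (1, e^{-iω},..., e^{-i(M-1)ω}). Then for every real ω, Σ_{t=1}^{4} |a(ω)·(W_Q·X_Q) e_t|² = 4. -/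
open Matrix

/- #### Auxiliary material -/

lemma sum_range_cast' (L : ℕ) (h : ℤ → ℂ) :
    ∑ m ∈ Finset.range L, h m = ∑ l ∈ Finset.Ico (0:ℤ) (L:ℤ), h l := by
  have himg : (Finset.range L).image (fun m : ℕ => (m : ℤ)) = Finset.Ico (0:ℤ) (L:ℤ) := by
    ext x
    simp only [Finset.mem_image, Finset.mem_range, Finset.mem_Ico]
    constructor
    · rintro ⟨m, hm, rfl⟩; omega
    · rintro ⟨h0, hx⟩; exact ⟨x.toNat, by omega, by omega⟩
  rw [← himg, Finset.sum_image (by intro a _ b _ hab; exact Nat.cast_injective hab)]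

/-- Signal polynomial of one sequence. -/
noncomputable def gseq (L : ℕ) (c : ℤ → ℂ) (ω : ℝ) : ℂ :=
  ∑ l ∈ Finset.Ico (0:ℤ) (L:ℤ), c l * Complex.exp (-(4*(l:ℂ))*(ω:ℂ)*Complex.I)

/-- Beamformed signal of antenna group `n`. -/
noncomputable def fsig (L : ℕ) (c : Fin 4 → ℤ → ℂ) (ω : ℝ) (n : Fin 4) : ℂ :=
  ∑ m : Fin (4*L), arv (4*L) ω m * WQ L c m n

lemma gcorr (L : ℕ) (w v : ℤ → ℂ)
    (hv : ∀ l : ℤ, (l < 0 ∨ (L:ℤ) ≤ l) → v l = 0)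
    (hvr : ∀ l : ℤ, (starRingEnd ℂ) (v l) = v l) (ω : ℝ) :
    gseq L w ω * (starRingEnd ℂ) (gseq L v ω)
    = ∑ τ ∈ Finset.Ico (1-(L:ℤ)) (L:ℤ),
        acf L w v τ * Complex.exp ((4*(τ:ℂ))*(ω:ℂ)*Complex.I) := by
  rw [gseq, gseq]
  have hconj : (starRingEnd ℂ) (∑ l ∈ Finset.Ico (0:ℤ) (L:ℤ),
      v l * Complex.exp (-(4*(l:ℂ))*(ω:ℂ)*Complex.I))
      = ∑ l ∈ Finset.Ico (0:ℤ) (L:ℤ), v l * Complex.exp ((4*(l:ℂ))*(ω:ℂ)*Complex.I) := by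
    rw [map_sum]
    refine Finset.sum_congr rfl fun l _ => ?_
    rw [_root_.map_mul, hvr, ← Complex.exp_conj]
    congr 1
    simp only [_root_.map_mul, map_neg, Complex.conj_I, Complex.conj_ofReal, map_ofNat, map_intCast]
    ring
  rw [hconj, Finset.sum_mul_sum]
  have step1 : ∀ l ∈ Finset.Ico (0:ℤ) (L:ℤ),
      (∑ l' ∈ Finset.Ico (0:ℤ) (L:ℤ),
        w l * Complex.exp (-(4*(l:ℂ))*(ω:ℂ)*Complex.I) *
          (v l' * Complex.exp ((4*(l':ℂ))*(ω:ℂ)*Complex.I)))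
      = ∑ τ ∈ Finset.Ico (1-(L:ℤ)) (L:ℤ),
          w l * v (l+τ) * Complex.exp ((4*(τ:ℂ))*(ω:ℂ)*Complex.I) := by
    intro l hl
    simp only [Finset.mem_Ico] at hl
    have hsub : Finset.Ico (0:ℤ) (L:ℤ) ⊆ Finset.Ico (l+(1-(L:ℤ))) (l+(L:ℤ)) := by
      intro x hx; simp only [Finset.mem_Ico] at *; omega
    rw [Finset.sum_subset hsub (by
      intro x hx hxn
      simp only [Finset.mem_Ico] at hx hxn
      rw [hv x (by omega)]
      ring)]
    rw [← Finset.map_add_left_Ico, Finset.sum_map]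
    refine Finset.sum_congr rfl fun τ _ => ?_
    simp only [addLeftEmbedding_apply]
    have he : Complex.exp (-(4*(l:ℂ))*(ω:ℂ)*Complex.I) *
        Complex.exp ((4*(((l+τ):ℤ):ℂ))*(ω:ℂ)*Complex.I)
        = Complex.exp ((4*(τ:ℂ))*(ω:ℂ)*Complex.I) := by
      rw [← Complex.exp_add]; congr 1; push_cast; ring
    linear_combination (w l * v (l+τ)) * he
  rw [Finset.sum_congr rfl step1, Finset.sum_comm]
  refine Finset.sum_congr rfl fun τ _ => ?_
  rw [acf, sum_range_cast' L (fun m => w m * (starRingEnd ℂ) (v (m + τ))), Finset.sum_mul]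
  refine Finset.sum_congr rfl fun l _ => ?_
  rw [hvr]

noncomputable def eqv (L : ℕ) : Fin L × Fin 4 ≃ Fin (4*L) :=
  finProdFinEquiv.trans (finCongr (mul_comm L 4))

lemma fsig_eq (L : ℕ) (c : Fin 4 → ℤ → ℂ) (n : Fin 4) (ω : ℝ) :
    fsig L c ω n
    = ((Real.sqrt (4 / (4 * (L : ℝ)))) : ℂ) * Complex.exp (-((n:ℕ):ℂ)*(ω:ℂ)*Complex.I) *
      gseq L (c n) ω := by
  set κ : ℂ := ((Real.sqrt (4 / (4 * (L : ℝ)))) : ℂ) with hκdef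
  rw [fsig, gseq]
  simp only [WQ, Matrix.of_apply]
  rw [← Equiv.sum_comp (eqv L)
    (fun m => arv (4*L) ω m * (κ * kron L (c n) ((n:ℕ):ℤ) ((m:ℕ):ℤ))),
    Fintype.sum_prod_type]
  have hval : ∀ (l : Fin L) (r : Fin 4), ((eqv L (l, r) : Fin (4*L)) : ℕ) = (r:ℕ) + 4*(l:ℕ) := by
    intro l r; rfl
  have hinner : ∀ l : Fin L,
      (∑ r : Fin 4, arv (4*L) ω (eqv L (l, r)) *
        (κ * kron L (c n) ((n:ℕ):ℤ) (((eqv L (l, r) : Fin (4*L)):ℕ):ℤ)))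
      = κ * Complex.exp (-((n:ℕ):ℂ)*(ω:ℂ)*Complex.I) *
          (c n ((l:ℕ):ℤ) * Complex.exp (-(4*(((l:ℕ):ℤ):ℂ))*(ω:ℂ)*Complex.I)) := by
    intro l
    rw [Fintype.sum_eq_single n (by
      intro r hr
      have hrn : (r:ℕ) ≠ (n:ℕ) := fun h => hr (Fin.ext h)
      have h4 : (r:ℕ) < 4 := r.2
      have h4' : (n:ℕ) < 4 := n.2
      rw [hval]
      simp only [kron]
      rw [if_neg (by push_cast; omega)]
      ring)]
    rw [hval]
    simp only [kron]
    have h4 : (n:ℕ) < 4 := n.2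
    have hl : (l:ℕ) < L := l.2
    rw [if_pos (by push_cast; omega)]
    have hq : ((((n:ℕ) + 4*(l:ℕ) : ℕ):ℤ) - ((n:ℕ):ℤ)) / 4 = ((l:ℕ):ℤ) := by push_cast; omega
    rw [hq, arv, hval]
    have hexp : Complex.exp (-Complex.I * ((((n:ℕ) + 4*(l:ℕ) : ℕ)):ℂ) * (ω:ℂ))
        = Complex.exp (-((n:ℕ):ℂ)*(ω:ℂ)*Complex.I) *
          Complex.exp (-(4*(((l:ℕ):ℤ):ℂ))*(ω:ℂ)*Complex.I) := by
      rw [← Complex.exp_add]; congr 1; push_cast; ring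
    rw [hexp]; ring
  rw [Finset.sum_congr rfl (fun l _ => hinner l), ← Finset.mul_sum]
  congr 1
  rw [Fin.sum_univ_eq_sum_range
      (fun l => c n ((l:ℕ):ℤ) * Complex.exp (-(4*(((l:ℕ):ℤ):ℂ))*(ω:ℂ)*Complex.I)) L,
    sum_range_cast' L (fun l => c n l * Complex.exp (-(4*((l:ℤ):ℂ))*(ω:ℂ)*Complex.I))]

/-- for ±1-valued binary OCCs `{c₁,c₂}`, `{c₃,c₄}` (complementary
pairs, mutually orthogonal complementary) and symbols of modulus `1/2`, the
received signal sum power over the four time slots is constantly `4` at any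
angle `ω`. -/
theorem stmt11 (L : ℕ) (hL : 0 < L) (c : Fin 4 → ℤ → ℂ)
    (hsupp : ∀ n, ∀ l : ℤ, (l < 0 ∨ (L : ℤ) ≤ l) → c n l = 0)
    (hpm : ∀ n, ∀ l : ℤ, 0 ≤ l → l < (L : ℤ) → (c n l = 1 ∨ c n l = -1))
    (h12 : ∀ τ : ℤ, τ ≠ 0 → acf L (c 0) (c 0) τ + acf L (c 1) (c 1) τ = 0)
    (h34 : ∀ τ : ℤ, τ ≠ 0 → acf L (c 2) (c 2) τ + acf L (c 3) (c 3) τ = 0)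
    (hcross : ∀ τ : ℤ, acf L (c 0) (c 2) τ + acf L (c 1) (c 3) τ = 0)
    (x₁ x₂ x₃ x₄ : ℂ)
    (hx₁ : ‖x₁‖ = 1 / 2) (hx₂ : ‖x₂‖ = 1 / 2) (hx₃ : ‖x₃‖ = 1 / 2) (hx₄ : ‖x₄‖ = 1 / 2)
    (ω : ℝ) :
    ∑ t : Fin 4,
      ‖∑ m : Fin (4 * L), arv (4 * L) ω m * (WQ L c * XQ x₁ x₂ x₃ x₄) m t‖ ^ 2 = 4 := by
  have hLC : ((L:ℂ)) ≠ 0 := by exact_mod_cast hL.ne'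
  have creal : ∀ (n : Fin 4) (l : ℤ), (starRingEnd ℂ) (c n l) = c n l := by
    intro n l
    rcases lt_or_ge l 0 with h | h
    · rw [hsupp n l (Or.inl h)]; simp
    · rcases lt_or_ge l (L:ℤ) with h2 | h2
      · rcases hpm n l h h2 with h3 | h3 <;> rw [h3] <;> simp
      · rw [hsupp n l (Or.inr h2)]; simp
  set κ : ℂ := ((Real.sqrt (4 / (4 * (L : ℝ)))) : ℂ) with hκdef
  have hκ : κ * κ = 1 / (L:ℂ) := by
    rw [hκdef, ← Complex.ofReal_mul, Real.mul_self_sqrt (by positivity)]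
    have hL' : (L:ℝ) ≠ 0 := Nat.cast_ne_zero.2 hL.ne'
    rw [show 4 / (4*(L:ℝ)) = 1/(L:ℝ) by field_simp]
    push_cast
    ring
  -- pairwise products of the beamformed signals
  have hff : ∀ n n' : Fin 4, fsig L c ω n * (starRingEnd ℂ) (fsig L c ω n')
      = (1/(L:ℂ)) * Complex.exp (((((n':ℕ):ℂ) - ((n:ℕ):ℂ)))*(ω:ℂ)*Complex.I) *
        ∑ τ ∈ Finset.Ico (1-(L:ℤ)) (L:ℤ),
          acf L (c n) (c n') τ * Complex.exp ((4*(τ:ℂ))*(ω:ℂ)*Complex.I) := by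
    intro n n'
    rw [fsig_eq, fsig_eq, ← gcorr L (c n) (c n') (hsupp n') (creal n') ω]
    rw [_root_.map_mul, _root_.map_mul, ← hκdef, Complex.conj_ofReal, ← Complex.exp_conj]
    have hc : (starRingEnd ℂ) (-((n':ℕ):ℂ)*(ω:ℂ)*Complex.I) = ((n':ℕ):ℂ)*(ω:ℂ)*Complex.I := by
      simp only [_root_.map_mul, map_neg, Complex.conj_I, Complex.conj_ofReal, map_natCast]
      ring
    rw [hc]
    have he : Complex.exp (-((n:ℕ):ℂ)*(ω:ℂ)*Complex.I) *
        Complex.exp (((n':ℕ):ℂ)*(ω:ℂ)*Complex.I)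
        = Complex.exp (((((n':ℕ):ℂ) - ((n:ℕ):ℂ)))*(ω:ℂ)*Complex.I) := by
      rw [← Complex.exp_add]; congr 1; ring
    calc κ * Complex.exp (-((n:ℕ):ℂ)*(ω:ℂ)*Complex.I) * gseq L (c n) ω *
          (κ * Complex.exp (((n':ℕ):ℂ)*(ω:ℂ)*Complex.I) * (starRingEnd ℂ) (gseq L (c n') ω))
        = (κ*κ) * (Complex.exp (-((n:ℕ):ℂ)*(ω:ℂ)*Complex.I) *
            Complex.exp (((n':ℕ):ℂ)*(ω:ℂ)*Complex.I)) *
            (gseq L (c n) ω * (starRingEnd ℂ) (gseq L (c n') ω)) := by ring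
      _ = _ := by rw [hκ, he]
  -- value of the diagonal autocorrelation at τ = 0
  have hacf0 : ∀ n : Fin 4, acf L (c n) (c n) 0 = (L:ℂ) := by
    intro n
    rw [acf]
    rw [Finset.sum_congr rfl (fun m hm => by
      rw [add_zero, creal]
      have hmL : (m:ℤ) < (L:ℤ) := by exact_mod_cast Finset.mem_range.1 hm
      rcases hpm n m (by positivity) hmL with h | h <;> rw [h] <;> ring_nf
      : ∀ m ∈ Finset.range L, c n m * (starRingEnd ℂ) (c n ((m:ℤ) + 0)) = 1)]
    simp
  have h0mem : (0:ℤ) ∈ Finset.Ico (1-(L:ℤ)) (L:ℤ) := by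
    simp only [Finset.mem_Ico]; omega
  -- complementary pairs: sum of the two correlation polynomials
  have hpair : ∀ i j : Fin 4,
      (∀ τ : ℤ, τ ≠ 0 → acf L (c i) (c i) τ + acf L (c j) (c j) τ = 0) →
      (∑ τ ∈ Finset.Ico (1-(L:ℤ)) (L:ℤ),
          acf L (c i) (c i) τ * Complex.exp ((4*(τ:ℂ))*(ω:ℂ)*Complex.I))
      + (∑ τ ∈ Finset.Ico (1-(L:ℤ)) (L:ℤ),
          acf L (c j) (c j) τ * Complex.exp ((4*(τ:ℂ))*(ω:ℂ)*Complex.I)) = 2*(L:ℂ) := by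
    intro i j h
    rw [← Finset.sum_add_distrib]
    rw [Finset.sum_eq_single_of_mem 0 h0mem (fun τ _ hτ => by
      have hzero := h τ hτ
      linear_combination Complex.exp ((4*(τ:ℂ))*(ω:ℂ)*Complex.I) * hzero)]
    rw [hacf0 i, hacf0 j]
    norm_num
    ring
  -- the diagonal part
  have hffd : ∀ n : Fin 4, fsig L c ω n * (starRingEnd ℂ) (fsig L c ω n)
      = (1/(L:ℂ)) * ∑ τ ∈ Finset.Ico (1-(L:ℤ)) (L:ℤ),
          acf L (c n) (c n) τ * Complex.exp ((4*(τ:ℂ))*(ω:ℂ)*Complex.I) := by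
    intro n
    rw [hff n n]
    simp [sub_self]
  have hdiag : fsig L c ω 0 * (starRingEnd ℂ) (fsig L c ω 0)
      + fsig L c ω 1 * (starRingEnd ℂ) (fsig L c ω 1)
      + fsig L c ω 2 * (starRingEnd ℂ) (fsig L c ω 2)
      + fsig L c ω 3 * (starRingEnd ℂ) (fsig L c ω 3) = 4 := by
    rw [hffd 0, hffd 1, hffd 2, hffd 3]
    have h1 := hpair 0 1 h12
    have h2 := hpair 2 3 h34
    linear_combination (1/(L:ℂ)) * (h1 + h2) + 4 * (mul_inv_cancel₀ hLC)
  -- the cross part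
  have hScross : (∑ τ ∈ Finset.Ico (1-(L:ℤ)) (L:ℤ),
        acf L (c 0) (c 2) τ * Complex.exp ((4*(τ:ℂ))*(ω:ℂ)*Complex.I))
      + (∑ τ ∈ Finset.Ico (1-(L:ℤ)) (L:ℤ),
        acf L (c 1) (c 3) τ * Complex.exp ((4*(τ:ℂ))*(ω:ℂ)*Complex.I)) = 0 := by
    rw [← Finset.sum_add_distrib]
    apply Finset.sum_eq_zero
    intro τ _
    linear_combination Complex.exp ((4*(τ:ℂ))*(ω:ℂ)*Complex.I) * hcross τ
  have hA : fsig L c ω 0 * (starRingEnd ℂ) (fsig L c ω 2)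
      + fsig L c ω 1 * (starRingEnd ℂ) (fsig L c ω 3) = 0 := by
    rw [hff 0 2, hff 1 3]
    have e20 : (((((2:Fin 4):ℕ):ℂ) - (((0:Fin 4):ℕ):ℂ)))*(ω:ℂ)*Complex.I
        = (2:ℂ)*(ω:ℂ)*Complex.I := by norm_num
    have e31 : (((((3:Fin 4):ℕ):ℂ) - (((1:Fin 4):ℕ):ℂ)))*(ω:ℂ)*Complex.I
        = (2:ℂ)*(ω:ℂ)*Complex.I := by
      norm_num [show ((3:Fin 4):ℕ) = 3 from rfl, show ((1:Fin 4):ℕ) = 1 from rfl]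
    rw [e20, e31]
    linear_combination (1/(L:ℂ)) * Complex.exp ((2:ℂ)*(ω:ℂ)*Complex.I) * hScross
  have hB : fsig L c ω 2 * (starRingEnd ℂ) (fsig L c ω 0)
      + fsig L c ω 3 * (starRingEnd ℂ) (fsig L c ω 1) = 0 := by
    have h := congrArg (starRingEnd ℂ) hA
    simp only [map_add, _root_.map_mul, Complex.conj_conj, map_zero] at h
    linear_combination h
  -- symbol moduli
  have k₁ : x₁ * (starRingEnd ℂ) x₁ = 1/4 := by
    rw [Complex.mul_conj]
    rw [Complex.normSq_eq_norm_sq, hx₁]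
    norm_num
  have k₂ : x₂ * (starRingEnd ℂ) x₂ = 1/4 := by
    rw [Complex.mul_conj, Complex.normSq_eq_norm_sq, hx₂]; norm_num
  have k₃ : x₃ * (starRingEnd ℂ) x₃ = 1/4 := by
    rw [Complex.mul_conj, Complex.normSq_eq_norm_sq, hx₃]; norm_num
  have k₄ : x₄ * (starRingEnd ℂ) x₄ = 1/4 := by
    rw [Complex.mul_conj, Complex.normSq_eq_norm_sq, hx₄]; norm_num
  -- rewrite the received signal
  have hz : ∀ t : Fin 4,
      (∑ m : Fin (4 * L), arv (4 * L) ω m * (WQ L c * XQ x₁ x₂ x₃ x₄) m t)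
      = ∑ n : Fin 4, fsig L c ω n * XQ x₁ x₂ x₃ x₄ n t := by
    intro t
    simp only [Matrix.mul_apply, Finset.mul_sum]
    rw [Finset.sum_comm]
    refine Finset.sum_congr rfl fun n _ => ?_
    rw [fsig, Finset.sum_mul]
    refine Finset.sum_congr rfl fun m _ => ?_
    ring
  have habs : ∀ z : ℂ, (‖z‖:ℝ)^2 = (z * (starRingEnd ℂ) z).re := by
    intro z
    rw [Complex.mul_conj, Complex.ofReal_re, Complex.normSq_eq_norm_sq]
  rw [Fin.sum_univ_four]
  rw [habs, habs, habs, habs, hz 0, hz 1, hz 2, hz 3]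
  rw [← Complex.add_re, ← Complex.add_re, ← Complex.add_re]
  have key : (∑ n : Fin 4, fsig L c ω n * XQ x₁ x₂ x₃ x₄ n 0) *
        (starRingEnd ℂ) (∑ n : Fin 4, fsig L c ω n * XQ x₁ x₂ x₃ x₄ n 0)
      + (∑ n : Fin 4, fsig L c ω n * XQ x₁ x₂ x₃ x₄ n 1) *
        (starRingEnd ℂ) (∑ n : Fin 4, fsig L c ω n * XQ x₁ x₂ x₃ x₄ n 1)
      + (∑ n : Fin 4, fsig L c ω n * XQ x₁ x₂ x₃ x₄ n 2) *
        (starRingEnd ℂ) (∑ n : Fin 4, fsig L c ω n * XQ x₁ x₂ x₃ x₄ n 2)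
      + (∑ n : Fin 4, fsig L c ω n * XQ x₁ x₂ x₃ x₄ n 3) *
        (starRingEnd ℂ) (∑ n : Fin 4, fsig L c ω n * XQ x₁ x₂ x₃ x₄ n 3) = (4:ℂ) := by
    simp only [Fin.sum_univ_four, XQ, Matrix.cons_val', Matrix.cons_val_zero,
      Matrix.empty_val', Matrix.cons_val_fin_one, Matrix.cons_val_one, Matrix.head_cons,
      Matrix.head_fin_const, Matrix.cons_val_two, Matrix.tail_cons, Matrix.cons_val_three,
      Matrix.of_apply]
    simp only [map_add, _root_.map_mul, map_neg, Complex.conj_conj, mul_neg]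
    linear_combination
      (fsig L c ω 0 * (starRingEnd ℂ) (fsig L c ω 0)
        + fsig L c ω 1 * (starRingEnd ℂ) (fsig L c ω 1)
        + fsig L c ω 2 * (starRingEnd ℂ) (fsig L c ω 2)
        + fsig L c ω 3 * (starRingEnd ℂ) (fsig L c ω 3)) * (k₁ + k₂ + k₃ + k₄)
      + hdiag
      + (x₁ * (starRingEnd ℂ) x₃ + x₃ * (starRingEnd ℂ) x₁
         + x₂ * (starRingEnd ℂ) x₄ + x₄ * (starRingEnd ℂ) x₂) * (hA + hB)
  rw [key]
  norm_num
end

section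
/- Let B_1, B_2, B_3, B_4 be (N_e/2)×(N_a/2) matrices with entries in {1, −1} such that {B_1, B_2} and {B_3, B_4} are 2D complementary pairs, i.e., R_{B_1}(m,n) + R_{B_2}(m,n) = 0 and R_{B_3}(m,n) + R_{B_4}(m,n) = 0 for all (m,n) ≠ (0,0), and the two pairs are mutually orthogonal complementary, i.e., R_{B_1,B_3}(m,n) + R_{B_2,B_4}(m,n) = 0 for all (m,n). Set M = N_a·N_e, and let (p_n, q_n) for n = 1,2,3,4 be the four positions (0,0), (1,0), (0,1), (1,1) in {0,1}×{0,1}, with U_n the 2×2 matrix having a 1 at (p_n,q_n) and 0 elsewhere. Let x_1,...,x_4 be complex numbers each of modulus 1/2, let X_Q be the TBH code matrix of x_1,...,x_4, and for each time slot t = 1,...,4 define the N_e×N_a antenna-array signal A_t = √(4/M)·Σ_{n=1}^{4} (X_Q)_{n,t}·(B_n ⊗ U_n) and the angle-domain signal G_t(ω,υ) = Σ_{p,q} A_t(p,q)·e^{-i(pω + qυ)}. Then for all reals ω, υ, Σ_{t=1}^{4} |G_t(ω,υ)|² = 4. -/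
open Matrix

/-- 2D aperiodic crosscorrelation of two `L₁ × L₂` complex matrices (regarded as
functions on `ℤ × ℤ` vanishing outside `{0,...,L₁-1} × {0,...,L₂-1}`). -/
noncomputable def acf2 (L₁ L₂ : ℕ) (B D : ℤ → ℤ → ℂ) (m n : ℤ) : ℂ :=
  ∑ p ∈ Finset.range L₁, ∑ q ∈ Finset.range L₂,
    B p q * (starRingEnd ℂ) (D ((p : ℤ) + m) ((q : ℤ) + n))

/-- 2D Fourier transform of an `L₁ × L₂` complex matrix. -/
noncomputable def ft2 (L₁ L₂ : ℕ) (B : ℤ → ℤ → ℂ) (ω υ : ℝ) : ℂ :=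
  ∑ p ∈ Finset.range L₁, ∑ q ∈ Finset.range L₂,
    B p q * Complex.exp (-Complex.I * ((p : ℂ) * (ω : ℂ) + (q : ℂ) * (υ : ℂ)))

/-- Kronecker product `B ⊗ U_{p₀,q₀}`: the `2L₁ × 2L₂` matrix with entry
`B(a,b)` at position `(2a + p₀, 2b + q₀)` and zero elsewhere. -/
noncomputable def kron2 (L₁ L₂ : ℕ) (B : ℤ → ℤ → ℂ) (p₀ q₀ : ℤ) : ℤ → ℤ → ℂ :=
  fun p q =>
    if (p - p₀) % 2 = 0 ∧ 0 ≤ (p - p₀) / 2 ∧ (p - p₀) / 2 < (L₁ : ℤ) ∧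
       (q - q₀) % 2 = 0 ∧ 0 ≤ (q - q₀) / 2 ∧ (q - q₀) / 2 < (L₂ : ℤ)
    then B ((p - p₀) / 2) ((q - q₀) / 2) else 0

/-- The four positions `(0,0), (1,0), (0,1), (1,1)` in `{0,1} × {0,1}` for the
`2×2` selector matrices `U₁,...,U₄`. -/
def pqpos : Fin 4 → ℤ × ℤ := ![(0, 0), (1, 0), (0, 1), (1, 1)]

open Finset


lemma sum_range_two_mul (L : ℕ) (g : ℕ → ℂ) :
    ∑ p ∈ range (2 * L), g p = ∑ a ∈ range L, (g (2 * a) + g (2 * a + 1)) := by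
  induction L with
  | zero => simp
  | succ L ih =>
      have h : 2 * (L + 1) = (2 * L + 1) + 1 := by ring
      rw [h, sum_range_succ, sum_range_succ, ih, sum_range_succ, add_assoc]

lemma sum_range_int (L : ℕ) (g : ℤ → ℂ) :
    ∑ p' ∈ range L, g (p' : ℤ) = ∑ x ∈ Finset.Ico (0 : ℤ) (L : ℤ), g x := by
  refine Finset.sum_nbij' (fun p' => (p' : ℤ)) (fun x => x.toNat) ?_ ?_ ?_ ?_ ?_ <;>
    intros a ha <;> simp_all <;> omega

lemma shift_sum_s16 (L : ℕ) (p : ℕ) (hp : p < L) (g : ℤ → ℂ)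
    (hg : ∀ x : ℤ, x < 0 ∨ (L : ℤ) ≤ x → g x = 0) :
    ∑ p' ∈ range L, g (p' : ℤ) = ∑ m ∈ Finset.Ico (-(L : ℤ)) (L : ℤ), g ((p : ℤ) + m) := by
  rw [sum_range_int]
  have h2 : ∑ m ∈ Finset.Ico (-(L : ℤ)) (L : ℤ), g ((p : ℤ) + m)
      = ∑ x ∈ Finset.Ico ((p : ℤ) + -(L : ℤ)) ((p : ℤ) + (L : ℤ)), g x := by
    rw [← map_add_left_Ico, Finset.sum_map]
    rfl
  rw [h2]
  apply Finset.sum_subset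
  · apply Finset.Ico_subset_Ico <;> omega
  · intro x _ hx
    apply hg
    simp only [Finset.mem_Ico] at hx
    omega

lemma conj_ft2 (L₁ L₂ : ℕ) (Df : ℤ → ℤ → ℂ) (ω υ : ℝ) :
    (starRingEnd ℂ) (ft2 L₁ L₂ Df ω υ)
    = ∑ p' ∈ range L₁, ∑ q' ∈ range L₂,
        (starRingEnd ℂ) (Df p' q') *
          Complex.exp (Complex.I * ((p' : ℂ) * (ω : ℂ) + (q' : ℂ) * (υ : ℂ))) := by
  simp only [ft2, map_sum, _root_.map_mul, ← Complex.exp_conj, map_add, map_neg,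
    Complex.conj_I, _root_.map_mul, Complex.conj_ofReal, Complex.conj_natCast, neg_mul, neg_neg]

lemma ft2_mul_conj (L₁ L₂ : ℕ) (Bf Df : ℤ → ℤ → ℂ)
    (hD : ∀ p q : ℤ, (p < 0 ∨ (L₁ : ℤ) ≤ p ∨ q < 0 ∨ (L₂ : ℤ) ≤ q) → Df p q = 0)
    (ω υ : ℝ) :
    ft2 L₁ L₂ Bf ω υ * (starRingEnd ℂ) (ft2 L₁ L₂ Df ω υ)
    = ∑ m ∈ Finset.Ico (-(L₁ : ℤ)) (L₁ : ℤ), ∑ n ∈ Finset.Ico (-(L₂ : ℤ)) (L₂ : ℤ),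
        acf2 L₁ L₂ Bf Df m n * Complex.exp (Complex.I * ((m : ℂ) * (ω : ℂ) + (n : ℂ) * (υ : ℂ))) := by
  have key : ∀ p ∈ range L₁, ∀ q ∈ range L₂,
      (Bf p q * Complex.exp (-Complex.I * ((p : ℂ) * (ω : ℂ) + (q : ℂ) * (υ : ℂ)))) *
        (starRingEnd ℂ) (ft2 L₁ L₂ Df ω υ)
      = ∑ m ∈ Finset.Ico (-(L₁ : ℤ)) (L₁ : ℤ), ∑ n ∈ Finset.Ico (-(L₂ : ℤ)) (L₂ : ℤ),
          (Bf p q * (starRingEnd ℂ) (Df ((p : ℤ) + m) ((q : ℤ) + n))) *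
            Complex.exp (Complex.I * ((m : ℂ) * (ω : ℂ) + (n : ℂ) * (υ : ℂ))) := by
    intro p hp q hq
    rw [Finset.mem_range] at hp hq
    rw [conj_ft2]
    have step1 : ∑ p' ∈ range L₁, ∑ q' ∈ range L₂,
        (starRingEnd ℂ) (Df p' q') *
          Complex.exp (Complex.I * ((p' : ℂ) * (ω : ℂ) + (q' : ℂ) * (υ : ℂ)))
        = ∑ m ∈ Finset.Ico (-(L₁ : ℤ)) (L₁ : ℤ), ∑ n ∈ Finset.Ico (-(L₂ : ℤ)) (L₂ : ℤ),
            (starRingEnd ℂ) (Df ((p : ℤ) + m) ((q : ℤ) + n)) *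
              Complex.exp (Complex.I * (((((p : ℤ) + m : ℤ)) : ℂ) * (ω : ℂ) + ((((q : ℤ) + n : ℤ)) : ℂ) * (υ : ℂ))) := by
      have outer := shift_sum_s16 L₁ p hp
        (fun x => ∑ q' ∈ range L₂, (starRingEnd ℂ) (Df x q') *
          Complex.exp (Complex.I * ((x : ℂ) * (ω : ℂ) + (q' : ℂ) * (υ : ℂ))))
        (by
          intro x hx
          apply Finset.sum_eq_zero
          intro q' _
          rw [hD x q' (by omega)]
          simp)
      push_cast at outer ⊢
      rw [outer]
      apply Finset.sum_congr rfl
      intro m _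
      have inner := shift_sum_s16 L₂ q hq
        (fun y => (starRingEnd ℂ) (Df ((p : ℤ) + m) y) *
          Complex.exp (Complex.I * (((p : ℂ) + (m : ℂ)) * (ω : ℂ) + (y : ℂ) * (υ : ℂ))))
        (by
          intro y hy
          rw [hD _ y (by omega)]
          simp)
      push_cast at inner ⊢
      rw [inner]
    rw [step1, Finset.mul_sum]
    apply Finset.sum_congr rfl
    intro m _
    rw [Finset.mul_sum]
    apply Finset.sum_congr rfl
    intro n _
    rw [mul_mul_mul_comm]
    congr 1
    rw [← Complex.exp_add]
    congr 1
    push_cast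
    ring
  calc ft2 L₁ L₂ Bf ω υ * (starRingEnd ℂ) (ft2 L₁ L₂ Df ω υ)
      = ∑ p ∈ range L₁, ∑ q ∈ range L₂,
          (Bf p q * Complex.exp (-Complex.I * ((p : ℂ) * (ω : ℂ) + (q : ℂ) * (υ : ℂ)))) *
            (starRingEnd ℂ) (ft2 L₁ L₂ Df ω υ) := by
        rw [ft2, Finset.sum_mul]
        exact Finset.sum_congr rfl fun p _ => Finset.sum_mul ..
    _ = ∑ p ∈ range L₁, ∑ q ∈ range L₂,
          ∑ m ∈ Finset.Ico (-(L₁ : ℤ)) (L₁ : ℤ), ∑ n ∈ Finset.Ico (-(L₂ : ℤ)) (L₂ : ℤ),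
            (Bf p q * (starRingEnd ℂ) (Df ((p : ℤ) + m) ((q : ℤ) + n))) *
              Complex.exp (Complex.I * ((m : ℂ) * (ω : ℂ) + (n : ℂ) * (υ : ℂ))) := by
        exact Finset.sum_congr rfl fun p hp => Finset.sum_congr rfl fun q hq => key p hp q hq
    _ = ∑ m ∈ Finset.Ico (-(L₁ : ℤ)) (L₁ : ℤ), ∑ n ∈ Finset.Ico (-(L₂ : ℤ)) (L₂ : ℤ),
          ∑ p ∈ range L₁, ∑ q ∈ range L₂,
            (Bf p q * (starRingEnd ℂ) (Df ((p : ℤ) + m) ((q : ℤ) + n))) *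
              Complex.exp (Complex.I * ((m : ℂ) * (ω : ℂ) + (n : ℂ) * (υ : ℂ))) := by
        rw [Finset.sum_congr rfl fun p _ => Finset.sum_comm, Finset.sum_comm]
        refine Finset.sum_congr rfl fun m _ => ?_
        rw [Finset.sum_congr rfl fun p _ => Finset.sum_comm, Finset.sum_comm]
    _ = _ := by
        apply Finset.sum_congr rfl
        intro m _
        apply Finset.sum_congr rfl
        intro n _
        rw [acf2, Finset.sum_mul]
        exact Finset.sum_congr rfl fun p _ => (Finset.sum_mul ..).symm

lemma kron2_eval2 (L₁ L₂ : ℕ) (Bn : ℤ → ℤ → ℂ) (p₀ q₀ : ℤ)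
    (hp : p₀ = 0 ∨ p₀ = 1) (hq : q₀ = 0 ∨ q₀ = 1) (a b : ℕ) (ha : a < L₁) (hb : b < L₂)
    (t s : ℤ) (ht : t = 0 ∨ t = 1) (hs : s = 0 ∨ s = 1) :
    kron2 L₁ L₂ Bn p₀ q₀ (2 * (a : ℤ) + t) (2 * (b : ℤ) + s)
    = if t = p₀ ∧ s = q₀ then Bn a b else 0 := by
  by_cases h : t = p₀ ∧ s = q₀
  · obtain ⟨rfl, rfl⟩ := h
    rw [if_pos ⟨rfl, rfl⟩]
    unfold kron2
    rw [if_pos (by refine ⟨by omega, by omega, by omega, by omega, by omega, by omega⟩),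
      show (2 * (a : ℤ) + t - t) / 2 = (a : ℤ) from by omega,
      show (2 * (b : ℤ) + s - s) / 2 = (b : ℤ) from by omega]
  · rw [if_neg h]
    unfold kron2
    rw [if_neg]
    intro hc
    exact h ⟨by omega, by omega⟩

lemma ft2_kron (L₁ L₂ : ℕ) (Bn : ℤ → ℤ → ℂ) (p₀ q₀ : ℤ)
    (hp : p₀ = 0 ∨ p₀ = 1) (hq : q₀ = 0 ∨ q₀ = 1) (ω υ : ℝ) :
    ft2 (2 * L₁) (2 * L₂) (kron2 L₁ L₂ Bn p₀ q₀) ω υ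
    = Complex.exp (-Complex.I * ((p₀ : ℂ) * (ω : ℂ) + (q₀ : ℂ) * (υ : ℂ))) *
        ft2 L₁ L₂ Bn (2 * ω) (2 * υ) := by
  rw [ft2, ft2, sum_range_two_mul, Finset.mul_sum]
  refine Finset.sum_congr rfl fun a ha => ?_
  rw [Finset.mem_range] at ha
  rw [sum_range_two_mul, sum_range_two_mul, Finset.mul_sum, ← Finset.sum_add_distrib]
  refine Finset.sum_congr rfl fun b hb => ?_
  rw [Finset.mem_range] at hb
  have e00 : kron2 L₁ L₂ Bn p₀ q₀ (2 * (a : ℤ)) (2 * (b : ℤ))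
      = if (0 : ℤ) = p₀ ∧ (0 : ℤ) = q₀ then Bn a b else 0 := by
    simpa using kron2_eval2 L₁ L₂ Bn p₀ q₀ hp hq a b ha hb 0 0 (Or.inl rfl) (Or.inl rfl)
  have e01 : kron2 L₁ L₂ Bn p₀ q₀ (2 * (a : ℤ)) (2 * (b : ℤ) + 1)
      = if (0 : ℤ) = p₀ ∧ (1 : ℤ) = q₀ then Bn a b else 0 := by
    simpa using kron2_eval2 L₁ L₂ Bn p₀ q₀ hp hq a b ha hb 0 1 (Or.inl rfl) (Or.inr rfl)
  have e10 : kron2 L₁ L₂ Bn p₀ q₀ (2 * (a : ℤ) + 1) (2 * (b : ℤ))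
      = if (1 : ℤ) = p₀ ∧ (0 : ℤ) = q₀ then Bn a b else 0 := by
    simpa using kron2_eval2 L₁ L₂ Bn p₀ q₀ hp hq a b ha hb 1 0 (Or.inr rfl) (Or.inl rfl)
  have e11 : kron2 L₁ L₂ Bn p₀ q₀ (2 * (a : ℤ) + 1) (2 * (b : ℤ) + 1)
      = if (1 : ℤ) = p₀ ∧ (1 : ℤ) = q₀ then Bn a b else 0 := by
    simpa using kron2_eval2 L₁ L₂ Bn p₀ q₀ hp hq a b ha hb 1 1 (Or.inr rfl) (Or.inr rfl)
  push_cast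
  rw [e00, e01, e10, e11]
  rcases hp with rfl | rfl <;> rcases hq with rfl | rfl <;>
    [skip; skip; skip; skip] <;>
    · norm_num
      first
      | (left; congr 1; ring)
      | (rw [mul_left_comm, ← Complex.exp_add]; congr 2; ring)

lemma ft2_lin (M N : ℕ) (c : ℂ) (X : Fin 4 → ℂ) (f : Fin 4 → ℤ → ℤ → ℂ) (ω υ : ℝ) :
    ft2 M N (fun p q => c * ∑ n : Fin 4, X n * f n p q) ω υ
    = c * ∑ n : Fin 4, X n * ft2 M N (f n) ω υ := by
  unfold ft2
  calc ∑ p ∈ range M, ∑ q ∈ range N, (c * ∑ n : Fin 4, X n * f n p q) *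
          Complex.exp (-Complex.I * ((p : ℂ) * (ω : ℂ) + (q : ℂ) * (υ : ℂ)))
      = ∑ p ∈ range M, ∑ q ∈ range N, ∑ n : Fin 4, c * (X n * (f n p q *
          Complex.exp (-Complex.I * ((p : ℂ) * (ω : ℂ) + (q : ℂ) * (υ : ℂ))))) := by
        refine Finset.sum_congr rfl fun p _ => Finset.sum_congr rfl fun q _ => ?_
        rw [Finset.mul_sum, Finset.sum_mul]
        exact Finset.sum_congr rfl fun n _ => by ring
    _ = ∑ n : Fin 4, ∑ p ∈ range M, ∑ q ∈ range N, c * (X n * (f n p q *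
          Complex.exp (-Complex.I * ((p : ℂ) * (ω : ℂ) + (q : ℂ) * (υ : ℂ))))) := by
        rw [Finset.sum_congr rfl fun p _ => Finset.sum_comm, Finset.sum_comm]
    _ = _ := by
        rw [Finset.mul_sum]
        refine Finset.sum_congr rfl fun n _ => ?_
        simp only [Finset.mul_sum]

lemma acf_diag (L₁ L₂ : ℕ) (Bn : ℤ → ℤ → ℂ)
    (hpm : ∀ p q : ℤ, 0 ≤ p → p < (L₁ : ℤ) → 0 ≤ q → q < (L₂ : ℤ) →
      (Bn p q = 1 ∨ Bn p q = -1)) :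
    acf2 L₁ L₂ Bn Bn 0 0 = (L₁ : ℂ) * (L₂ : ℂ) := by
  unfold acf2
  have : ∀ p ∈ range L₁, ∑ q ∈ range L₂,
      Bn p q * (starRingEnd ℂ) (Bn ((p : ℤ) + 0) ((q : ℤ) + 0)) = (L₂ : ℂ) := by
    intro p hp
    rw [Finset.mem_range] at hp
    rw [Finset.sum_congr rfl (g := fun _ => (1 : ℂ)) fun q hq => ?_]
    · simp
    · rw [Finset.mem_range] at hq
      rw [add_zero, add_zero]
      rcases hpm p q (by positivity) (by exact_mod_cast hp) (by positivity)
        (by exact_mod_cast hq) with h | h <;> rw [h] <;> simp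
  rw [Finset.sum_congr rfl this]
  simp [mul_comm]

lemma pair_sum (L₁ L₂ : ℕ) (B0 B1 D0 D1 : ℤ → ℤ → ℂ)
    (hD0 : ∀ p q : ℤ, (p < 0 ∨ (L₁ : ℤ) ≤ p ∨ q < 0 ∨ (L₂ : ℤ) ≤ q) → D0 p q = 0)
    (hD1 : ∀ p q : ℤ, (p < 0 ∨ (L₁ : ℤ) ≤ p ∨ q < 0 ∨ (L₂ : ℤ) ≤ q) → D1 p q = 0)
    (ω υ : ℝ) :
    ft2 L₁ L₂ B0 ω υ * (starRingEnd ℂ) (ft2 L₁ L₂ D0 ω υ) +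
      ft2 L₁ L₂ B1 ω υ * (starRingEnd ℂ) (ft2 L₁ L₂ D1 ω υ)
    = ∑ m ∈ Finset.Ico (-(L₁ : ℤ)) (L₁ : ℤ), ∑ n ∈ Finset.Ico (-(L₂ : ℤ)) (L₂ : ℤ),
        (acf2 L₁ L₂ B0 D0 m n + acf2 L₁ L₂ B1 D1 m n) *
          Complex.exp (Complex.I * ((m : ℂ) * (ω : ℂ) + (n : ℂ) * (υ : ℂ))) := by
  rw [ft2_mul_conj L₁ L₂ B0 D0 hD0, ft2_mul_conj L₁ L₂ B1 D1 hD1,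
    ← Finset.sum_add_distrib]
  refine Finset.sum_congr rfl fun m _ => ?_
  rw [← Finset.sum_add_distrib]
  exact Finset.sum_congr rfl fun n _ => (add_mul _ _ _).symm

lemma gram (x1 x2 x3 x4 c1 c2 c3 c4 y1 y2 y3 y4 d1 d2 d3 d4 : ℂ) :
    (x1*y1 + x2*y2 + x3*y3 + x4*y4) * (c1*d1 + c2*d2 + c3*d3 + c4*d4)
    + (c2*y1 + (-c1)*y2 + c4*y3 + (-c3)*y4) * (x2*d1 + (-x1)*d2 + x4*d3 + (-x3)*d4)
    + (x3*y1 + x4*y2 + x1*y3 + x2*y4) * (c3*d1 + c4*d2 + c1*d3 + c2*d4)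
    + (c4*y1 + (-c3)*y2 + c2*y3 + (-c1)*y4) * (x4*d1 + (-x3)*d2 + x2*d3 + (-x1)*d4)
    = (x1*c1 + x2*c2 + x3*c3 + x4*c4) * (y1*d1 + y2*d2 + y3*d3 + y4*d4)
    + (x1*c3 + x3*c1 + x2*c4 + x4*c2) * (y1*d3 + y3*d1 + y2*d4 + y4*d2) := by
  ring


/-- for 2D binary OCCs `{B₁,B₂}`, `{B₃,B₄}` of size
`(N_e/2) × (N_a/2)` (here `L₁ = N_e/2`, `L₂ = N_a/2`, `M = N_a N_e = 4L₁L₂`) and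
symbols of modulus `1/2`, the angle-domain signals
`G_t(ω,υ)` of `A_t = √(4/M) ∑_n (X_Q)_{n,t} (B_n ⊗ U_n)` satisfy
`∑_{t=1}^4 |G_t(ω,υ)|² = 4` for all `ω, υ`. -/
theorem stmt16 (L₁ L₂ : ℕ) (hL₁ : 0 < L₁) (hL₂ : 0 < L₂)
    (B : Fin 4 → ℤ → ℤ → ℂ)
    (hsupp : ∀ n, ∀ p q : ℤ, (p < 0 ∨ (L₁ : ℤ) ≤ p ∨ q < 0 ∨ (L₂ : ℤ) ≤ q) → B n p q = 0)
    (hpm : ∀ n, ∀ p q : ℤ, 0 ≤ p → p < (L₁ : ℤ) → 0 ≤ q → q < (L₂ : ℤ) →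
      (B n p q = 1 ∨ B n p q = -1))
    (h12 : ∀ m n : ℤ, (m, n) ≠ (0, 0) →
      acf2 L₁ L₂ (B 0) (B 0) m n + acf2 L₁ L₂ (B 1) (B 1) m n = 0)
    (h34 : ∀ m n : ℤ, (m, n) ≠ (0, 0) →
      acf2 L₁ L₂ (B 2) (B 2) m n + acf2 L₁ L₂ (B 3) (B 3) m n = 0)
    (hcross : ∀ m n : ℤ,
      acf2 L₁ L₂ (B 0) (B 2) m n + acf2 L₁ L₂ (B 1) (B 3) m n = 0)
    (x₁ x₂ x₃ x₄ : ℂ)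
    (hx₁ : ‖x₁‖ = 1 / 2) (hx₂ : ‖x₂‖ = 1 / 2) (hx₃ : ‖x₃‖ = 1 / 2) (hx₄ : ‖x₄‖ = 1 / 2)
    (ω υ : ℝ) :
    ∑ t : Fin 4,
      ‖ft2 (2 * L₁) (2 * L₂)
        (fun p q => (Real.sqrt (4 / (4 * (L₁ : ℝ) * (L₂ : ℝ))) : ℂ) *
          ∑ n : Fin 4, XQ x₁ x₂ x₃ x₄ n t *
            kron2 L₁ L₂ (B n) (pqpos n).1 (pqpos n).2 p q) ω υ‖ ^ 2 = 4 := by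
  classical
  set c : ℝ := Real.sqrt (4 / (4 * (L₁ : ℝ) * (L₂ : ℝ))) with hc
  set F : Fin 4 → ℂ := fun n => ft2 L₁ L₂ (B n) (2 * ω) (2 * υ) with hF
  set y : Fin 4 → ℂ := fun n =>
    ft2 (2 * L₁) (2 * L₂) (kron2 L₁ L₂ (B n) (pqpos n).1 (pqpos n).2) ω υ with hy
  have hy0 : y 0 = Complex.exp (-Complex.I * ((((0:ℤ)):ℂ) * ω + (((0:ℤ)):ℂ) * υ)) * F 0 :=
    ft2_kron L₁ L₂ (B 0) 0 0 (Or.inl rfl) (Or.inl rfl) ω υ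
  have hy1 : y 1 = Complex.exp (-Complex.I * ((((1:ℤ)):ℂ) * ω + (((0:ℤ)):ℂ) * υ)) * F 1 :=
    ft2_kron L₁ L₂ (B 1) 1 0 (Or.inr rfl) (Or.inl rfl) ω υ
  have hy2 : y 2 = Complex.exp (-Complex.I * ((((0:ℤ)):ℂ) * ω + (((1:ℤ)):ℂ) * υ)) * F 2 :=
    ft2_kron L₁ L₂ (B 2) 0 1 (Or.inl rfl) (Or.inr rfl) ω υ
  have hy3 : y 3 = Complex.exp (-Complex.I * ((((1:ℤ)):ℂ) * ω + (((1:ℤ)):ℂ) * υ)) * F 3 :=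
    ft2_kron L₁ L₂ (B 3) 1 1 (Or.inr rfl) (Or.inr rfl) ω υ
  have phase_conj : ∀ a b : ℤ,
      (starRingEnd ℂ) (Complex.exp (-Complex.I * ((a : ℂ) * ω + (b : ℂ) * υ)))
      = Complex.exp (Complex.I * ((a : ℂ) * ω + (b : ℂ) * υ)) := by
    intro a b
    rw [← Complex.exp_conj]
    congr 1
    simp [_root_.map_mul, Complex.conj_I, Complex.conj_ofReal]
  -- diagonal sums
  have hmem1 : (0 : ℤ) ∈ Finset.Ico (-(L₁ : ℤ)) (L₁ : ℤ) := by
    rw [Finset.mem_Ico]; omega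
  have hmem2 : (0 : ℤ) ∈ Finset.Ico (-(L₂ : ℤ)) (L₂ : ℤ)  := by
    rw [Finset.mem_Ico]; omega
  have hdiag : ∀ i j : Fin 4, (∀ m n : ℤ, (m, n) ≠ (0, 0) →
      acf2 L₁ L₂ (B i) (B i) m n + acf2 L₁ L₂ (B j) (B j) m n = 0) →
      F i * (starRingEnd ℂ) (F i) + F j * (starRingEnd ℂ) (F j) = 2 * (L₁:ℂ) * (L₂:ℂ) := by
    intro i j hij
    rw [hF]
    simp only
    rw [pair_sum L₁ L₂ (B i) (B j) (B i) (B j) (hsupp i) (hsupp j) (2*ω) (2*υ)]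
    rw [Finset.sum_eq_single_of_mem 0 hmem1 (fun m _ hm => Finset.sum_eq_zero fun n _ => by
      rw [hij m n (by simp [hm]), zero_mul])]
    rw [Finset.sum_eq_single_of_mem 0 hmem2 (fun n _ hn => by
      rw [hij 0 n (by simp [hn]), zero_mul])]
    rw [acf_diag L₁ L₂ (B i) (hpm i), acf_diag L₁ L₂ (B j) (hpm j)]
    norm_num
    ring
  have hdiagA := hdiag 0 1 h12
  have hdiagB := hdiag 2 3 h34
  have hcross0 : F 0 * (starRingEnd ℂ) (F 2) + F 1 * (starRingEnd ℂ) (F 3) = 0 := by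
    rw [hF]
    simp only
    rw [pair_sum L₁ L₂ (B 0) (B 1) (B 2) (B 3) (hsupp 2) (hsupp 3) (2*ω) (2*υ)]
    refine Finset.sum_eq_zero fun m _ => Finset.sum_eq_zero fun n _ => ?_
    rw [hcross m n, zero_mul]
  have hcross0' : F 2 * (starRingEnd ℂ) (F 0) + F 3 * (starRingEnd ℂ) (F 1) = 0 := by
    have h := congrArg (starRingEnd ℂ) hcross0
    simp only [map_add, _root_.map_mul, Complex.conj_conj, map_zero] at h
    linear_combination h
  -- phase cancellation products
  have hprod : ∀ (a b a' b' : ℤ) (z w : ℂ),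
      (Complex.exp (-Complex.I * ((a : ℂ) * ω + (b : ℂ) * υ)) * z) *
        (starRingEnd ℂ) (Complex.exp (-Complex.I * ((a' : ℂ) * ω + (b' : ℂ) * υ)) * w)
      = Complex.exp (Complex.I * (((a' : ℂ) - a) * ω + ((b' : ℂ) - b) * υ)) *
          (z * (starRingEnd ℂ) w) := by
    intro a b a' b' z w
    rw [_root_.map_mul, phase_conj, mul_mul_mul_comm, ← Complex.exp_add]
    congr 2
    ring
  have hT : y 0 * (starRingEnd ℂ) (y 0) + y 1 * (starRingEnd ℂ) (y 1) +
      y 2 * (starRingEnd ℂ) (y 2) + y 3 * (starRingEnd ℂ) (y 3) = 4 * (L₁:ℂ) * (L₂:ℂ) := by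
    rw [hy0, hy1, hy2, hy3, hprod, hprod, hprod, hprod]
    norm_num
    linear_combination hdiagA + hdiagB
  have hU : y 0 * (starRingEnd ℂ) (y 2) + y 2 * (starRingEnd ℂ) (y 0) +
      y 1 * (starRingEnd ℂ) (y 3) + y 3 * (starRingEnd ℂ) (y 1) = 0 := by
    rw [hy0, hy1, hy2, hy3, hprod, hprod, hprod, hprod]
    push_cast
    ring_nf
    linear_combination Complex.exp (Complex.I * υ) * hcross0 +
      Complex.exp (-(Complex.I * υ)) * hcross0'
  -- symbol moduli
  have hxx : ∀ z : ℂ, ‖z‖ = 1 / 2 → z * (starRingEnd ℂ) z = 1 / 4 := by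
    intro z hz
    rw [Complex.mul_conj, Complex.normSq_eq_norm_sq, hz]
    norm_num
  -- expansion of G_t
  have hG : ∀ t : Fin 4,
      ft2 (2 * L₁) (2 * L₂)
        (fun p q => (c : ℂ) *
          ∑ n : Fin 4, XQ x₁ x₂ x₃ x₄ n t *
            kron2 L₁ L₂ (B n) (pqpos n).1 (pqpos n).2 p q) ω υ
      = (c : ℂ) * ∑ n : Fin 4, XQ x₁ x₂ x₃ x₄ n t * y n := by
    intro t
    exact ft2_lin (2 * L₁) (2 * L₂) (c : ℂ) (fun n => XQ x₁ x₂ x₃ x₄ n t)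
      (fun n => kron2 L₁ L₂ (B n) (pqpos n).1 (pqpos n).2) ω υ
  have hsum : ∑ t : Fin 4,
      ((c : ℂ) * ∑ n : Fin 4, XQ x₁ x₂ x₃ x₄ n t * y n) *
        (starRingEnd ℂ) ((c : ℂ) * ∑ n : Fin 4, XQ x₁ x₂ x₃ x₄ n t * y n) = 4 := by
    have expand : ∑ t : Fin 4,
        ((c : ℂ) * ∑ n : Fin 4, XQ x₁ x₂ x₃ x₄ n t * y n) *
          (starRingEnd ℂ) ((c : ℂ) * ∑ n : Fin 4, XQ x₁ x₂ x₃ x₄ n t * y n)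
        = ((c : ℂ) * (c : ℂ)) *
            ((x₁ * (starRingEnd ℂ) x₁ + x₂ * (starRingEnd ℂ) x₂ +
              x₃ * (starRingEnd ℂ) x₃ + x₄ * (starRingEnd ℂ) x₄) *
              (y 0 * (starRingEnd ℂ) (y 0) + y 1 * (starRingEnd ℂ) (y 1) +
               y 2 * (starRingEnd ℂ) (y 2) + y 3 * (starRingEnd ℂ) (y 3)) +
             (x₁ * (starRingEnd ℂ) x₃ + x₃ * (starRingEnd ℂ) x₁ +
              x₂ * (starRingEnd ℂ) x₄ + x₄ * (starRingEnd ℂ) x₂) *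
              (y 0 * (starRingEnd ℂ) (y 2) + y 2 * (starRingEnd ℂ) (y 0) +
               y 1 * (starRingEnd ℂ) (y 3) + y 3 * (starRingEnd ℂ) (y 1))) := by
      simp only [Fin.sum_univ_four, _root_.map_mul, map_add, map_sum, map_neg,
        Complex.conj_conj, Complex.conj_ofReal, XQ, Matrix.cons_val', Matrix.cons_val_zero,
        Matrix.cons_val_one, Matrix.head_cons, Matrix.empty_val', Matrix.cons_val_fin_one,
        Matrix.head_fin_const, Matrix.of_apply, Matrix.cons_val_succ, Matrix.cons_val_two,
        Matrix.cons_val_three, Matrix.tail_cons]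
      ring
    rw [expand, hT, hU, hxx x₁ hx₁, hxx x₂ hx₂, hxx x₃ hx₃, hxx x₄ hx₄]
    have hcc : (c : ℂ) * (c : ℂ) = ((1 / ((L₁ : ℝ) * (L₂ : ℝ)) : ℝ) : ℂ) := by
      rw [← Complex.ofReal_mul]
      congr 1
      rw [hc, Real.mul_self_sqrt (by positivity)]
      have h1 : (L₁ : ℝ) ≠ 0 := Nat.cast_ne_zero.mpr hL₁.ne'
      have h2 : (L₂ : ℝ) ≠ 0 := Nat.cast_ne_zero.mpr hL₂.ne'
      field_simp
    rw [hcc]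
    have h1 : (L₁ : ℂ) ≠ 0 := Nat.cast_ne_zero.mpr hL₁.ne'
    have h2 : (L₂ : ℂ) ≠ 0 := Nat.cast_ne_zero.mpr hL₂.ne'
    push_cast
    field_simp
    ring
  calc ∑ t : Fin 4,
      ‖ft2 (2 * L₁) (2 * L₂)
        (fun p q => (c : ℂ) *
          ∑ n : Fin 4, XQ x₁ x₂ x₃ x₄ n t *
            kron2 L₁ L₂ (B n) (pqpos n).1 (pqpos n).2 p q) ω υ‖ ^ 2
      = ∑ t : Fin 4,
          (((c : ℂ) * ∑ n : Fin 4, XQ x₁ x₂ x₃ x₄ n t * y n) *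
            (starRingEnd ℂ) ((c : ℂ) * ∑ n : Fin 4, XQ x₁ x₂ x₃ x₄ n t * y n)).re := by
        refine Finset.sum_congr rfl fun t _ => ?_
        rw [hG t, Complex.mul_conj, Complex.ofReal_re, ← Complex.sq_norm]
    _ = 4 := by
        rw [← Complex.re_sum, hsum]
        norm_num
end

section
/- Let c_1, c_2, c_3, c_4 be complex sequences of length L such that {c_1, c_2} and {c_3, c_4} are complementary pairs, i.e., R_{c_1}(τ) + R_{c_2}(τ) = 0 and R_{c_3}(τ) + R_{c_4}(τ) = 0 for all τ ≠ 0, and mutually orthogonal complementary, i.e., R_{c_1,c_3}(τ) + R_{c_2,c_4}(τ) = 0 for all τ. For n ∈ {1,2,3,4}, let w_n = c_n ⊗ u_n be the length-4L sequence with (c_n ⊗ u_n)(4l + (n−1)) = c_n(l) and zero elsewhere. Then {w_1, w_2} and {w_3, w_4} are complementary pairs and mutually orthogonal complementary: R_{w_1}(τ) + R_{w_2}(τ) = 0 and R_{w_3}(τ) + R_{w_4}(τ) = 0 for all τ ≠ 0, and R_{w_1,w_3}(τ) + R_{w_2,w_4}(τ) = 0 for all τ. -/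
lemma kron_shift (L : ℕ) (b : ℤ → ℂ) (nb : ℤ)
    (hsb : ∀ l : ℤ, (l < 0 ∨ (L : ℤ) ≤ l) → b l = 0) (x : ℤ) :
    kron L b nb (4 * x + nb) = b x := by
  unfold kron
  have h4 : 4 * x + nb - nb = 4 * x := by ring
  rw [h4, Int.mul_ediv_cancel_left _ (by norm_num : (4:ℤ) ≠ 0)]
  simp only [Int.mul_emod_right, true_and]
  split
  · rfl
  · next h => exact (hsb x (by omega)).symm

lemma kron_zero (L : ℕ) (b : ℤ → ℂ) (nb m : ℤ) (h : (m - nb) % 4 ≠ 0) :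
    kron L b nb m = 0 := by
  unfold kron
  rw [if_neg]
  tauto

lemma acf_kron (L : ℕ) (a b : ℤ → ℂ) (na nb : ℤ) (hna : 0 ≤ na) (hna4 : na < 4)
    (hsb : ∀ l : ℤ, (l < 0 ∨ (L : ℤ) ≤ l) → b l = 0) (τ : ℤ) :
    acf (4 * L) (kron L a na) (kron L b nb) τ =
      if (τ + na - nb) % 4 = 0 then acf L a b ((τ + na - nb) / 4) else 0 := by
  classical
  unfold acf
  set f : ℕ → ℂ := fun m => kron L a na (m : ℤ) * (starRingEnd ℂ) (kron L b nb ((m:ℤ) + τ)) with hf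
  have hinj : ∀ x ∈ Finset.range L, ∀ y ∈ Finset.range L,
      4*x + na.toNat = 4*y + na.toNat → x = y := fun x _ y _ h => by omega
  have himg : ∑ m ∈ Finset.range (4*L), f m
      = ∑ m ∈ (Finset.range L).image (fun l => 4*l + na.toNat), f m := by
    apply (Finset.sum_subset _ _).symm
    · intro m hm
      simp only [Finset.mem_image, Finset.mem_range] at hm ⊢
      obtain ⟨l, hl, rfl⟩ := hm
      omega
    · intro m _ hnot
      simp only [Finset.mem_image, Finset.mem_range] at hnot
      by_contra hne
      have hk : kron L a na (m:ℤ) ≠ 0 := by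
        intro h
        apply hne
        simp [hf, h]
      unfold kron at hk
      rw [ite_ne_right_iff] at hk
      obtain ⟨⟨h1, h2, h3⟩, _⟩ := hk
      exact hnot ⟨(((m:ℤ) - na) / 4).toNat, by omega, by omega⟩
  rw [himg, Finset.sum_image hinj]
  have hcast : ∀ l : ℕ, ((4*l + na.toNat : ℕ) : ℤ) = 4*(l:ℤ) + na := by
    intro l; push_cast [Int.toNat_of_nonneg hna]; ring
  by_cases h : (τ + na - nb) % 4 = 0
  · rw [if_pos h]
    set t := (τ + na - nb) / 4 with ht
    have hτ : τ = 4 * t + nb - na := by omega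
    apply Finset.sum_congr rfl
    intro l hl
    simp only [Finset.mem_range] at hl
    simp only [hf, hcast l]
    have e1 : kron L a na (4*(l:ℤ) + na) = a l := by
      unfold kron
      have h4 : 4*(l:ℤ) + na - na = 4*(l:ℤ) := by ring
      rw [h4, Int.mul_ediv_cancel_left _ (by norm_num : (4:ℤ) ≠ 0),
        if_pos ⟨Int.mul_emod_right 4 l, by omega, by omega⟩]
    have e2 : (4*(l:ℤ) + na) + τ = 4*((l:ℤ) + t) + nb := by rw [hτ]; ring
    rw [e1, e2, kron_shift L b nb hsb]
  · rw [if_neg h]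
    apply Finset.sum_eq_zero
    intro l hl
    simp only [hf, hcast l]
    have : kron L b nb ((4*(l:ℤ) + na) + τ) = 0 := by
      apply kron_zero
      omega
    rw [this]
    simp

/-- if `{c₁,c₂}` and `{c₃,c₄}` are complementary pairs that are
mutually orthogonal complementary, then so are the length-`4L` sequences
`w_n = c_n ⊗ u_n` (with `w_n` placed at positions `4l + (n-1)`, 0-indexed). -/
theorem stmt17 (L : ℕ) (c : Fin 4 → ℤ → ℂ)
    (hsupp : ∀ n, ∀ l : ℤ, (l < 0 ∨ (L : ℤ) ≤ l) → c n l = 0)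
    (h12 : ∀ τ : ℤ, τ ≠ 0 → acf L (c 0) (c 0) τ + acf L (c 1) (c 1) τ = 0)
    (h34 : ∀ τ : ℤ, τ ≠ 0 → acf L (c 2) (c 2) τ + acf L (c 3) (c 3) τ = 0)
    (hcross : ∀ τ : ℤ, acf L (c 0) (c 2) τ + acf L (c 1) (c 3) τ = 0) :
    (∀ τ : ℤ, τ ≠ 0 →
        acf (4 * L) (kron L (c 0) 0) (kron L (c 0) 0) τ
          + acf (4 * L) (kron L (c 1) 1) (kron L (c 1) 1) τ = 0) ∧
      (∀ τ : ℤ, τ ≠ 0 →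
        acf (4 * L) (kron L (c 2) 2) (kron L (c 2) 2) τ
          + acf (4 * L) (kron L (c 3) 3) (kron L (c 3) 3) τ = 0) ∧
      (∀ τ : ℤ,
        acf (4 * L) (kron L (c 0) 0) (kron L (c 2) 2) τ
          + acf (4 * L) (kron L (c 1) 1) (kron L (c 3) 3) τ = 0) := by
  refine ⟨?_, ?_, ?_⟩
  · intro τ hτ
    rw [acf_kron L (c 0) (c 0) 0 0 le_rfl (by norm_num) (hsupp 0) τ,
        acf_kron L (c 1) (c 1) 1 1 (by norm_num) (by norm_num) (hsupp 1) τ]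
    have e1 : τ + 0 - 0 = τ := by ring
    have e2 : τ + 1 - 1 = τ := by ring
    rw [e1, e2]
    split
    · next h => exact h12 _ (by omega)
    · simp
  · intro τ hτ
    rw [acf_kron L (c 2) (c 2) 2 2 (by norm_num) (by norm_num) (hsupp 2) τ,
        acf_kron L (c 3) (c 3) 3 3 (by norm_num) (by norm_num) (hsupp 3) τ]
    have e1 : τ + 2 - 2 = τ := by ring
    have e2 : τ + 3 - 3 = τ := by ring
    rw [e1, e2]
    split
    · next h => exact h34 _ (by omega)
    · simp
  · intro τ
    rw [acf_kron L (c 0) (c 2) 0 2 le_rfl (by norm_num) (hsupp 2) τ,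
        acf_kron L (c 1) (c 3) 1 3 (by norm_num) (by norm_num) (hsupp 3) τ]
    have e1 : τ + 0 - 2 = τ - 2 := by ring
    have e2 : τ + 1 - 3 = τ - 2 := by ring
    rw [e1, e2]
    split
    · exact hcross _
    · simp
end
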